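/- arXiv:1206.2612 — 3 statements merged into one kernel-verified Lean document; each statement's English description precedes it below -/
import Mathlib

section
/- Let 𝒮 be a maximal nested collection with support S. Then the map φ : S → 𝒮 sending each s ∈ S to the smallest member of 𝒮 containing s is well-defined (such a smallest member exists for each s ∈ S) and is a bijection between S and 𝒮. -/
open MvPolynomial

/-- Reachability inside a subset `U` of vertices, along edges of `E`. -/
def ReachIn {n : ℕ} (E : Fin n → Fin n → Prop) (U : Finset (Fin n)) (a b : Fin n) : Prop :=
  Relation.ReflTransGen (fun x y => E x y ∧ x ∈ U ∧ y ∈ U) a b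

/-- A nonempty subset `I` is strongly connected if any vertex of `I` can reach any
other vertex of `I` by a directed path staying inside `I`. -/
def StronglyConnected {n : ℕ} (E : Fin n → Fin n → Prop) (I : Finset (Fin n)) : Prop :=
  I.Nonempty ∧ ∀ a ∈ I, ∀ b ∈ I, ReachIn E I a b

open Classical in
/-- The strongly connected component of `x` in the induced subgraph on `U`. -/
noncomputable def scc {n : ℕ} (E : Fin n → Fin n → Prop) (U : Finset (Fin n)) (x : Fin n) :
    Finset (Fin n) :=
  U.filter fun y => ReachIn E U x y ∧ ReachIn E U y x

/-- `S ⊕ j` : the strongly connected component of `S ∪ {j}` containing `j`. -/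
noncomputable def oplus {n : ℕ} (E : Fin n → Fin n → Prop) (S : Finset (Fin n)) (j : Fin n) :
    Finset (Fin n) :=
  scc E (insert j S) j

/-- `S ⊖ j = (S ∪ {j}) − (S ⊕ j)`. -/
noncomputable def ominus {n : ℕ} (E : Fin n → Fin n → Prop) (S : Finset (Fin n)) (j : Fin n) :
    Finset (Fin n) :=
  insert j S \ oplus E S j

/-- A family of strongly connected subsets is nested if any two members are nested or
disjoint, and any tuple of pairwise disjoint members are exactly the strongly connected
components of their union. -/
def Nested {n : ℕ} (E : Fin n → Fin n → Prop) (𝒮 : Finset (Finset (Fin n))) : Prop :=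
  (∀ I ∈ 𝒮, StronglyConnected E I) ∧
  (∀ I ∈ 𝒮, ∀ J ∈ 𝒮, I ⊆ J ∨ J ⊆ I ∨ Disjoint I J) ∧
  (∀ 𝒯 ⊆ 𝒮, (∀ I ∈ 𝒯, ∀ J ∈ 𝒯, I ≠ J → Disjoint I J) →
    ∀ I ∈ 𝒯, ∀ x ∈ I, scc E (𝒯.sup id) x = I)

/-- The support of a collection: the union of its members. -/
def nsupport {n : ℕ} (𝒮 : Finset (Finset (Fin n))) : Finset (Fin n) := 𝒮.sup id

/-- A nested collection is maximal (for its support) if the only nested collection with the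
same support containing it is itself. -/
def MaximalNested {n : ℕ} (E : Fin n → Fin n → Prop) (𝒮 : Finset (Finset (Fin n))) : Prop :=
  Nested E 𝒮 ∧ ∀ 𝒮' : Finset (Finset (Fin n)),
    Nested E 𝒮' → nsupport 𝒮' = nsupport 𝒮 → 𝒮 ⊆ 𝒮' → 𝒮' = 𝒮

section Aux
variable {n : ℕ} {E : Fin n → Fin n → Prop}

lemma reachIn_mono {U V : Finset (Fin n)} (h : U ⊆ V) {a b : Fin n} (hr : ReachIn E U a b) :
    ReachIn E V a b :=
  Relation.ReflTransGen.mono (fun x y (hxy : E x y ∧ x ∈ U ∧ y ∈ U) =>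
    (⟨hxy.1, h hxy.2.1, h hxy.2.2⟩ : E x y ∧ x ∈ V ∧ y ∈ V)) _ _ hr

lemma mem_scc' {U : Finset (Fin n)} {x y : Fin n} :
    y ∈ scc E U x ↔ y ∈ U ∧ ReachIn E U x y ∧ ReachIn E U y x := by
  classical
  simp [scc]

lemma scc_subset' {U : Finset (Fin n)} {x : Fin n} : scc E U x ⊆ U :=
  fun y hy => (mem_scc'.1 hy).1

lemma self_mem_scc' {U : Finset (Fin n)} {x : Fin n} (h : x ∈ U) : x ∈ scc E U x :=
  mem_scc'.2 ⟨h, .refl, .refl⟩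

lemma scc_congr' {U : Finset (Fin n)} {x y : Fin n} (hxy : ReachIn E U x y)
    (hyx : ReachIn E U y x) : scc E U x = scc E U y := by
  ext z
  simp only [mem_scc']
  exact ⟨fun ⟨h1, h2, h3⟩ => ⟨h1, hyx.trans h2, h3.trans hxy⟩,
    fun ⟨h1, h2, h3⟩ => ⟨h1, hxy.trans h2, h3.trans hyx⟩⟩

lemma reachIn_scc_self {U : Finset (Fin n)} {a b : Fin n} (hab : ReachIn E U a b)
    (hba : ReachIn E U b a) : ReachIn E (scc E U a) a b := by
  unfold ReachIn at hab
  revert hba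
  induction hab using Relation.ReflTransGen.head_induction_on with
  | refl => exact fun _ => .refl
  | head h hcb ih =>
    rename_i a c
    intro hba
    have hac : ReachIn E U a c := Relation.ReflTransGen.single h
    have hca : ReachIn E U c a := Relation.ReflTransGen.trans hcb hba
    have hbc : ReachIn E U b c := hba.trans hac
    have hcongr : scc E U a = scc E U c := scc_congr' hac hca
    rw [hcongr]
    have hamem : a ∈ scc E U c := mem_scc'.2 ⟨h.2.1, hca, hac⟩
    have hcmem : c ∈ scc E U c := self_mem_scc' h.2.2
    exact (ih hbc).head ⟨h.1, hamem, hcmem⟩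

lemma reachIn_scc {U : Finset (Fin n)} {x a b : Fin n} (ha : a ∈ scc E U x)
    (hb : b ∈ scc E U x) : ReachIn E (scc E U x) a b := by
  obtain ⟨haU, hxa, hax⟩ := mem_scc'.1 ha
  obtain ⟨hbU, hxb, hbx⟩ := mem_scc'.1 hb
  have h1 : ReachIn E U a b := hax.trans hxb
  have h2 : ReachIn E U b a := hbx.trans hxa
  have := reachIn_scc_self h1 h2
  rwa [scc_congr' hax hxa] at this

lemma sc_scc {U : Finset (Fin n)} {x : Fin n} (h : x ∈ U) :
    StronglyConnected E (scc E U x) :=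
  ⟨⟨x, self_mem_scc' h⟩, fun a ha b hb => reachIn_scc ha hb⟩

lemma scc_eq_of_sc {I : Finset (Fin n)} (h : StronglyConnected E I) {x : Fin n} (hx : x ∈ I) :
    scc E I x = I := by
  ext y
  rw [mem_scc']
  exact ⟨fun hy => hy.1, fun hy => ⟨hy, h.2 x hx y hy, h.2 y hy x hx⟩⟩

end Aux
section Aux2
variable {n : ℕ} {E : Fin n → Fin n → Prop} {𝒮 : Finset (Finset (Fin n))}

lemma mem_nsupport' {s : Fin n} : s ∈ nsupport 𝒮 ↔ ∃ I ∈ 𝒮, s ∈ I := by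
  simp [nsupport, Finset.mem_sup]

lemma exists_min_mem (h : Nested E 𝒮) {s : Fin n} (hs : s ∈ nsupport 𝒮) :
    ∃ I ∈ 𝒮, s ∈ I ∧ ∀ J ∈ 𝒮, s ∈ J → I ⊆ J := by
  classical
  obtain ⟨I0, hI0, hsI0⟩ := mem_nsupport'.1 hs
  set F := 𝒮.filter (fun K => s ∈ K) with hF
  have hFne : F.Nonempty := ⟨I0, Finset.mem_filter.2 ⟨hI0, hsI0⟩⟩
  obtain ⟨I, hIF, hmin⟩ := F.exists_minimal hFne
  obtain ⟨hI𝒮, hsI⟩ := Finset.mem_filter.1 hIF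
  refine ⟨I, hI𝒮, hsI, fun J hJ hsJ => ?_⟩
  rcases h.2.1 I hI𝒮 J hJ with h1 | h1 | h1
  · exact h1
  · rcases eq_or_lt_of_le (Finset.le_iff_subset.2 h1) with heq | hlt
    · exact le_of_eq heq.symm
    · exact absurd (hmin (Finset.mem_filter.2 ⟨hJ, hsJ⟩) hlt.le)
        (fun h' => lt_irrefl _ (lt_of_lt_of_le hlt h'))
  · exact absurd hsJ (Finset.disjoint_left.1 h1 hsI)

lemma exists_max_proper (h : Nested E 𝒮) {I K : Finset (Fin n)} (hI : I ∈ 𝒮) (hK : K ∈ 𝒮)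
    (hKI : K ⊆ I) (hne : K ≠ I) :
    ∃ M ∈ 𝒮, K ⊆ M ∧ M ⊆ I ∧ M ≠ I ∧
      ∀ L ∈ 𝒮, M ⊆ L → L ⊆ I → L = I ∨ L = M := by
  classical
  set F := 𝒮.filter (fun M => K ⊆ M ∧ M ⊆ I ∧ M ≠ I) with hF
  have hFne : F.Nonempty := ⟨K, Finset.mem_filter.2 ⟨hK, subset_rfl, hKI, hne⟩⟩
  obtain ⟨M, hMF, hmax⟩ := F.exists_maximal hFne
  obtain ⟨hM𝒮, hKM, hMI, hMne⟩ := Finset.mem_filter.1 hMF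
  refine ⟨M, hM𝒮, hKM, hMI, hMne, fun L hL hML hLI => ?_⟩
  by_cases hLe : L = I
  · exact Or.inl hLe
  · right
    rcases eq_or_lt_of_le (Finset.le_iff_subset.2 hML) with heq | hlt
    · exact heq.symm
    · exact absurd (hmax (Finset.mem_filter.2 ⟨hL, hKM.trans hML, hLI, hLe⟩) hlt.le)
        (fun h' => lt_irrefl _ (lt_of_lt_of_le hlt h'))

/-- surjectivity core: every member has an element not in any proper submember. -/
lemma exists_min_elt (h : Nested E 𝒮) {I : Finset (Fin n)} (hI : I ∈ 𝒮) :
    ∃ s ∈ I, ∀ J ∈ 𝒮, s ∈ J → I ⊆ J := by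
  classical
  by_contra hcon
  push_neg at hcon
  -- every s ∈ I lies in a proper member of 𝒮 inside I
  have hprop : ∀ s ∈ I, ∃ J ∈ 𝒮, s ∈ J ∧ J ⊆ I ∧ J ≠ I := by
    intro s hs
    obtain ⟨J, hJ, hsJ, hnsub⟩ := hcon s hs
    rcases h.2.1 I hI J hJ with h1 | h1 | h1
    · exact absurd h1 hnsub
    · exact ⟨J, hJ, hsJ, h1, fun he => hnsub (he ▸ subset_rfl)⟩
    · exact absurd hs (Finset.disjoint_right.1 h1 hsJ)
  set 𝒯 := 𝒮.filter (fun M => M ⊆ I ∧ M ≠ I ∧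
    ∀ L ∈ 𝒮, M ⊆ L → L ⊆ I → L = I ∨ L = M) with h𝒯
  have h𝒯sub : 𝒯 ⊆ 𝒮 := Finset.filter_subset _ _
  -- each element of I is in a member of 𝒯
  have hcover : ∀ s ∈ I, ∃ M ∈ 𝒯, s ∈ M := by
    intro s hs
    obtain ⟨J, hJ, hsJ, hJI, hJne⟩ := hprop s hs
    obtain ⟨M, hM𝒮, hJM, hMI, hMne, hMmax⟩ := exists_max_proper h hI hJ hJI hJne
    exact ⟨M, Finset.mem_filter.2 ⟨hM𝒮, hMI, hMne, hMmax⟩, hJM hsJ⟩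
  -- pairwise disjoint
  have hdisj : ∀ A ∈ 𝒯, ∀ B ∈ 𝒯, A ≠ B → Disjoint A B := by
    intro A hA B hB hne
    obtain ⟨hA𝒮, hAI, hAne, hAmax⟩ := Finset.mem_filter.1 hA
    obtain ⟨hB𝒮, hBI, hBne, hBmax⟩ := Finset.mem_filter.1 hB
    rcases h.2.1 A hA𝒮 B hB𝒮 with h1 | h1 | h1
    · rcases hAmax B hB𝒮 h1 hBI with h2 | h2
      · exact absurd h2 hBne
      · exact absurd h2.symm hne
    · rcases hBmax A hA𝒮 h1 hAI with h2 | h2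
      · exact absurd h2 hAne
      · exact absurd h2 hne
    · exact h1
  have hsup : 𝒯.sup id = I := by
    apply Finset.Subset.antisymm
    · intro y hy
      obtain ⟨M, hM, hyM⟩ := Finset.mem_sup.1 hy
      rw [h𝒯, Finset.mem_filter] at hM
      exact hM.2.1 hyM
    · intro s hs
      obtain ⟨M, hM, hsM⟩ := hcover s hs
      exact Finset.mem_sup.2 ⟨M, hM, hsM⟩
  have hscI : StronglyConnected E I := h.1 I hI
  obtain ⟨x, hx⟩ := hscI.1
  obtain ⟨M, hM, hxM⟩ := hcover x hx
  have h1 : scc E (𝒯.sup id) x = M := h.2.2 𝒯 h𝒯sub hdisj M hM x hxM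
  rw [hsup, scc_eq_of_sc hscI hx] at h1
  rw [h𝒯, Finset.mem_filter] at hM
  exact hM.2.2.1 h1.symm

end Aux2

section Key
variable {n : ℕ} {E : Fin n → Fin n → Prop} {𝒮 : Finset (Finset (Fin n))}

lemma key_inj (h𝒮 : MaximalNested E 𝒮) {I : Finset (Fin n)} {s t : Fin n}
    (hI : I ∈ 𝒮) (hs : s ∈ I) (ht : t ∈ I)
    (hsmin : ∀ J ∈ 𝒮, s ∈ J → I ⊆ J) (htmin : ∀ J ∈ 𝒮, t ∈ J → I ⊆ J) : s = t := by
  classical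
  obtain ⟨hnes, hmax⟩ := h𝒮
  have hsc := hnes.1
  have hnest := hnes.2.1
  have hscc := hnes.2.2
  by_contra hst
  -- the maximal proper submembers of I
  set 𝒯max := 𝒮.filter (fun M => M ⊆ I ∧ M ≠ I ∧
    ∀ L ∈ 𝒮, M ⊆ L → L ⊆ I → L = I ∨ L = M) with h𝒯max
  have hmemmax : ∀ M, M ∈ 𝒯max ↔ M ∈ 𝒮 ∧ M ⊆ I ∧ M ≠ I ∧
      ∀ L ∈ 𝒮, M ⊆ L → L ⊆ I → L = I ∨ L = M := by
    intro M; rw [h𝒯max, Finset.mem_filter]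
  have h𝒯maxsub : 𝒯max ⊆ 𝒮 := Finset.filter_subset _ _
  have hdisjmax : ∀ A ∈ 𝒯max, ∀ B ∈ 𝒯max, A ≠ B → Disjoint A B := by
    intro A hA B hB hne
    rw [hmemmax] at hA hB
    obtain ⟨hA𝒮, hAI, hAne, hAmax⟩ := hA
    obtain ⟨hB𝒮, hBI, hBne, hBmax⟩ := hB
    rcases hnest A hA𝒮 B hB𝒮 with h1 | h1 | h1
    · rcases hAmax B hB𝒮 h1 hBI with h2 | h2
      · exact absurd h2 hBne
      · exact absurd h2.symm hne
    · rcases hBmax A hA𝒮 h1 hAI with h2 | h2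
      · exact absurd h2 hAne
      · exact absurd h2 hne
    · exact h1
  set D := 𝒯max.sup id with hD
  have hDI : D ⊆ I := by
    intro y hy
    obtain ⟨M, hM, hyM⟩ := Finset.mem_sup.1 hy
    exact ((hmemmax M).1 hM).2.1 hyM
  have hsD : s ∉ D := by
    intro hsD
    obtain ⟨M, hM, hsM⟩ := Finset.mem_sup.1 hsD
    rw [hmemmax] at hM
    exact hM.2.2.1 (Finset.Subset.antisymm hM.2.1 (hsmin M hM.1 hsM))
  have htD : t ∉ D := by
    intro htD
    obtain ⟨M, hM, htM⟩ := Finset.mem_sup.1 htD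
    rw [hmemmax] at hM
    exact hM.2.2.1 (Finset.Subset.antisymm hM.2.1 (htmin M hM.1 htM))
  -- the new member J
  set J := scc E (insert s D) s with hJ
  have hsJ : s ∈ J := by rw [hJ]; exact self_mem_scc' (Finset.mem_insert_self s D)
  have hJsub : J ⊆ insert s D := by rw [hJ]; exact scc_subset'
  have hinsI : insert s D ⊆ I := Finset.insert_subset hs hDI
  have hJI : J ⊆ I := hJsub.trans hinsI
  have htJ : t ∉ J := by
    intro hh
    rcases Finset.mem_insert.1 (hJsub hh) with h | h
    · exact hst h.symm
    · exact htD h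
  have hscJ : StronglyConnected E J := by rw [hJ]; exact sc_scc (Finset.mem_insert_self s D)
  have hJnot : J ∉ 𝒮 := fun hh => htJ (hsmin J hh hsJ ht)
  -- absorption: members inside D which meet J are inside J
  have habs : ∀ K ∈ 𝒮, K ⊆ D → ∀ u ∈ K, u ∈ J → K ⊆ J := by
    intro K hK hKD u huK huJ v hvK
    have hKins : K ⊆ insert s D := hKD.trans (Finset.subset_insert s D)
    have hsck := hsc K hK
    have h1 : ReachIn E (insert s D) u v := reachIn_mono hKins (hsck.2 u huK v hvK)
    have h2 : ReachIn E (insert s D) v u := reachIn_mono hKins (hsck.2 v hvK u huK)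
    rw [hJ] at huJ ⊢
    obtain ⟨hu1, hu2, hu3⟩ := mem_scc'.1 huJ
    exact mem_scc'.2 ⟨hKins hvK, hu2.trans h1, h2.trans hu3⟩
  -- proper submembers of I sit inside D
  have hproperD : ∀ K ∈ 𝒮, K ⊆ I → K ≠ I → K ⊆ D := by
    intro K hK hKI hKne
    obtain ⟨M, hM𝒮, hKM, hMI, hMne, hMmax⟩ := exists_max_proper hnes hI hK hKI hKne
    have hM : M ∈ 𝒯max := (hmemmax M).2 ⟨hM𝒮, hMI, hMne, hMmax⟩
    exact hKM.trans (fun y hy => Finset.mem_sup.2 ⟨M, hM, hy⟩)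
  -- J is comparable-or-disjoint with every member
  have hcomp : ∀ K ∈ 𝒮, J ⊆ K ∨ K ⊆ J ∨ Disjoint J K := by
    intro K hK
    rcases hnest I hI K hK with h1 | h1 | h1
    · exact Or.inl (hJI.trans h1)
    · by_cases hKI : K = I
      · exact Or.inl (hKI ▸ hJI)
      · by_cases hdj : Disjoint J K
        · exact Or.inr (Or.inr hdj)
        · obtain ⟨u, huJ, huK⟩ := Finset.not_disjoint_iff.1 hdj
          exact Or.inr (Or.inl (habs K hK (hproperD K hK h1 hKI) u huK huJ))
    · exact Or.inr (Or.inr (Finset.disjoint_left.2 fun {a} haJ => Finset.disjoint_left.1 h1 (hJI haJ)))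
  -- the children of I contained in J, and the decomposition of J
  set 𝒯J := 𝒯max.filter (fun M => M ⊆ J) with h𝒯J
  have h𝒯J𝒮 : 𝒯J ⊆ 𝒮 := (Finset.filter_subset _ _).trans h𝒯maxsub
  have hJdecomp : J = insert s (𝒯J.sup id) := by
    ext y
    constructor
    · intro hyJ
      by_cases hys : y = s
      · exact hys ▸ Finset.mem_insert_self _ _
      · have hyD : y ∈ D := (Finset.mem_insert.1 (hJsub hyJ)).resolve_left hys
        obtain ⟨M, hM, hyM⟩ := Finset.mem_sup.1 hyD
        have hMD : M ⊆ D := fun z hz => Finset.mem_sup.2 ⟨M, hM, hz⟩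
        have hMJ : M ⊆ J := habs M (h𝒯maxsub hM) hMD y hyM hyJ
        refine Finset.mem_insert_of_mem (Finset.mem_sup.2 ⟨M, ?_, hyM⟩)
        rw [h𝒯J, Finset.mem_filter]; exact ⟨hM, hMJ⟩
    · intro hy
      rcases Finset.mem_insert.1 hy with rfl | hy
      · exact hsJ
      · obtain ⟨M, hM, hyM⟩ := Finset.mem_sup.1 hy
        rw [h𝒯J, Finset.mem_filter] at hM
        exact hM.2 hyM
  -- the new collection is nested
  have hnes' : Nested E (insert J 𝒮) := by
    refine ⟨?_, ?_, ?_⟩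
    · intro A hA
      rcases Finset.mem_insert.1 hA with rfl | hA
      · exact hscJ
      · exact hsc A hA
    · intro A hA B hB
      rcases Finset.mem_insert.1 hA with rfl | hA𝒮
      · rcases Finset.mem_insert.1 hB with rfl | hB𝒮
        · exact Or.inl subset_rfl
        · exact hcomp B hB𝒮
      · rcases Finset.mem_insert.1 hB with rfl | hB𝒮
        · rcases hcomp A hA𝒮 with h | h | h
          · exact Or.inr (Or.inl h)
          · exact Or.inl h
          · exact Or.inr (Or.inr h.symm)
        · exact hnest A hA𝒮 B hB𝒮
    · intro 𝒯 h𝒯 hdisj K hK x hx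
      by_cases hJmem : J ∈ 𝒯
      case neg =>
        have h𝒯𝒮 : 𝒯 ⊆ 𝒮 := fun A hA =>
          (Finset.mem_insert.1 (h𝒯 hA)).resolve_left (fun he => hJmem (he ▸ hA))
        exact hscc 𝒯 h𝒯𝒮 hdisj K hK x hx
      case pos =>
      set U := 𝒯.sup id with hUdef
      set 𝒯₀ := 𝒯.erase J with h𝒯₀
      have h𝒯₀𝒯 : 𝒯₀ ⊆ 𝒯 := Finset.erase_subset _ _
      have h𝒯₀𝒮 : 𝒯₀ ⊆ 𝒮 := by
        intro A hA
        have hAne := Finset.ne_of_mem_erase hA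
        exact (Finset.mem_insert.1 (h𝒯 (h𝒯₀𝒯 hA))).resolve_left hAne
      have hdisjJ : ∀ A ∈ 𝒯₀, Disjoint A J :=
        fun A hA => hdisj A (h𝒯₀𝒯 hA) J hJmem (Finset.ne_of_mem_erase hA)
      have hABtype : ∀ A ∈ 𝒯₀, A ⊆ D ∨ Disjoint A I := by
        intro A hA
        have hA𝒮 := h𝒯₀𝒮 hA
        rcases hnest I hI A hA𝒮 with h1 | h1 | h1
        · exact absurd hsJ (Finset.disjoint_left.1 (hdisjJ A hA) (h1 hs))
        · by_cases hAI : A = I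
          · exact absurd hsJ (Finset.disjoint_left.1 (hdisjJ A hA) (hAI ▸ hs))
          · exact Or.inl (hproperD A hA𝒮 h1 hAI)
        · exact Or.inr h1.symm
      set 𝒯B := 𝒯₀.filter (fun A => Disjoint A I) with h𝒯B
      have h𝒯B𝒯₀ : 𝒯B ⊆ 𝒯₀ := Finset.filter_subset _ _
      set 𝒲 := 𝒯₀ ∪ 𝒯J with h𝒲
      have h𝒲𝒮 : 𝒲 ⊆ 𝒮 := Finset.union_subset h𝒯₀𝒮 h𝒯J𝒮
      have hWdisj : ∀ A ∈ 𝒲, ∀ B ∈ 𝒲, A ≠ B → Disjoint A B := by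
        intro A hA B hB hne
        rcases Finset.mem_union.1 hA with hA | hA <;>
          rcases Finset.mem_union.1 hB with hB | hB
        · exact hdisj A (h𝒯₀𝒯 hA) B (h𝒯₀𝒯 hB) hne
        · have hBJ : B ⊆ J := by
            rw [h𝒯J, Finset.mem_filter] at hB; exact hB.2
          exact Finset.disjoint_left.2 fun {a} haA haB =>
            Finset.disjoint_left.1 (hdisjJ A hA) haA (hBJ haB)
        · have hAJ : A ⊆ J := by
            rw [h𝒯J, Finset.mem_filter] at hA; exact hA.2
          exact Finset.disjoint_right.2 fun {a} haB haA =>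
            Finset.disjoint_left.1 (hdisjJ B hB) haB (hAJ haA)
        · exact hdisjmax A ((Finset.filter_subset _ _) hA) B ((Finset.filter_subset _ _) hB) hne
      have hU : U = insert s (𝒲.sup id) := by
        rw [hUdef]
        ext y
        constructor
        · intro hy
          obtain ⟨A, hA, hyA⟩ := Finset.mem_sup.1 hy
          by_cases hAJ : A = J
          · subst hAJ
            rw [id_eq, hJdecomp, Finset.mem_insert] at hyA
            rcases hyA with rfl | hyA
            · exact Finset.mem_insert_self _ _
            · obtain ⟨M, hM, hyM⟩ := Finset.mem_sup.1 hyA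
              exact Finset.mem_insert_of_mem
                (Finset.mem_sup.2 ⟨M, Finset.mem_union_right _ hM, hyM⟩)
          · exact Finset.mem_insert_of_mem
              (Finset.mem_sup.2 ⟨A, Finset.mem_union_left _ (Finset.mem_erase.2 ⟨hAJ, hA⟩), hyA⟩)
        · intro hy
          rcases Finset.mem_insert.1 hy with rfl | hy
          · exact Finset.mem_sup.2 ⟨J, hJmem, hsJ⟩
          · obtain ⟨A, hA, hyA⟩ := Finset.mem_sup.1 hy
            rcases Finset.mem_union.1 hA with hA | hA
            · exact Finset.mem_sup.2 ⟨A, h𝒯₀𝒯 hA, hyA⟩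
            · have hAJ : A ⊆ J := by rw [h𝒯J, Finset.mem_filter] at hA; exact hA.2
              exact Finset.mem_sup.2 ⟨J, hJmem, hAJ hyA⟩
      -- the comparison family for type-B members
      have h𝒯₂𝒮 : insert I 𝒯B ⊆ 𝒮 := Finset.insert_subset hI (h𝒯B𝒯₀.trans h𝒯₀𝒮)
      have h𝒯₂disj : ∀ A ∈ insert I 𝒯B, ∀ B ∈ insert I 𝒯B, A ≠ B → Disjoint A B := by
        intro A hA B hB hne
        rcases Finset.mem_insert.1 hA with rfl | hA
        · rcases Finset.mem_insert.1 hB with rfl | hB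
          · exact absurd rfl hne
          · have : Disjoint B A := by rw [h𝒯B, Finset.mem_filter] at hB; exact hB.2
            exact this.symm
        · rcases Finset.mem_insert.1 hB with rfl | hB
          · rw [h𝒯B, Finset.mem_filter] at hA; exact hA.2
          · exact hdisj A (h𝒯₀𝒯 (h𝒯B𝒯₀ hA)) B (h𝒯₀𝒯 (h𝒯B𝒯₀ hB)) hne
      set V := (insert I 𝒯B).sup id with hV
      have hVI : scc E V s = I :=
        hscc (insert I 𝒯B) h𝒯₂𝒮 h𝒯₂disj I (Finset.mem_insert_self _ _) s hs
      have hIV : I ⊆ V := fun y hy => Finset.mem_sup.2 ⟨I, Finset.mem_insert_self _ _, hy⟩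
      have hUV : U ⊆ V := by
        intro y hy
        rw [hU] at hy
        rcases Finset.mem_insert.1 hy with rfl | hy
        · exact hIV hs
        · obtain ⟨A, hA, hyA⟩ := Finset.mem_sup.1 hy
          rcases Finset.mem_union.1 hA with hA | hA
          · rcases hABtype A hA with hAD | hAdisj
            · exact hIV (hDI (hAD hyA))
            · refine Finset.mem_sup.2 ⟨A, Finset.mem_insert_of_mem ?_, hyA⟩
              rw [h𝒯B, Finset.mem_filter]; exact ⟨hA, hAdisj⟩
          · have hAJ : A ⊆ J := by rw [h𝒯J, Finset.mem_filter] at hA; exact hA.2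
            exact hIV (hJI (hAJ hyA))
      -- scc of s in U is J
      have hsU : s ∈ U := Finset.mem_sup.2 ⟨J, hJmem, hsJ⟩
      have hJU : J ⊆ U := fun y hy => Finset.mem_sup.2 ⟨J, hJmem, hy⟩
      have hCI : scc E U s ⊆ I := by
        intro y hy
        obtain ⟨hyU, h1, h2⟩ := mem_scc'.1 hy
        have : y ∈ scc E V s :=
          mem_scc'.2 ⟨hUV hyU, reachIn_mono hUV h1, reachIn_mono hUV h2⟩
        rwa [hVI] at this
      have hCsD : scc E U s ⊆ insert s D := by
        intro y hy
        have hyI : y ∈ I := hCI hy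
        have hyU : y ∈ U := scc_subset' hy
        rw [hU] at hyU
        rcases Finset.mem_insert.1 hyU with rfl | hyW
        · exact Finset.mem_insert_self _ _
        · obtain ⟨A, hA, hyA⟩ := Finset.mem_sup.1 hyW
          rcases Finset.mem_union.1 hA with hA | hA
          · rcases hABtype A hA with hAD | hAdisj
            · exact Finset.mem_insert_of_mem (hAD hyA)
            · exact absurd hyI (Finset.disjoint_left.1 hAdisj hyA)
          · have hAJ : A ⊆ J := by rw [h𝒯J, Finset.mem_filter] at hA; exact hA.2
            exact hJsub (hAJ hyA)
      have hsub1 : scc E U s ⊆ J := by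
        intro y hy
        have h1 : ReachIn E (scc E U s) s y := reachIn_scc (self_mem_scc' hsU) hy
        have h2 : ReachIn E (scc E U s) y s := reachIn_scc hy (self_mem_scc' hsU)
        rw [hJ]
        exact mem_scc'.2 ⟨hCsD hy, reachIn_mono hCsD h1, reachIn_mono hCsD h2⟩
      have hsub2 : J ⊆ scc E U s := fun y hy => mem_scc'.2
        ⟨hJU hy, reachIn_mono hJU (hscJ.2 s hsJ y hy), reachIn_mono hJU (hscJ.2 y hy s hsJ)⟩
      have hsccUs : scc E U s = J := Finset.Subset.antisymm hsub1 hsub2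
      have hsccJ : ∀ y ∈ J, scc E U y = J := by
        intro y hy
        rw [← hsccUs]
        exact (scc_congr' (reachIn_mono hJU (hscJ.2 s hsJ y hy))
          (reachIn_mono hJU (hscJ.2 y hy s hsJ))).symm
      -- scc of members of 𝒯₀
      have hscc𝒯₀ : ∀ A ∈ 𝒯₀, ∀ z ∈ A, scc E U z = A := by
        intro A hA z hz
        have hA𝒮 := h𝒯₀𝒮 hA
        have hAU : A ⊆ U := fun y hy => Finset.mem_sup.2 ⟨A, h𝒯₀𝒯 hA, hy⟩
        have hscA := hsc A hA𝒮
        have hsub2' : A ⊆ scc E U z := fun y hy => mem_scc'.2 ⟨hAU hy,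
          reachIn_mono hAU (hscA.2 z hz y hy), reachIn_mono hAU (hscA.2 y hy z hz)⟩
        by_cases hdisjI : Disjoint A I
        · have hA𝒯B : A ∈ 𝒯B := by rw [h𝒯B, Finset.mem_filter]; exact ⟨hA, hdisjI⟩
          have hVA : scc E V z = A :=
            hscc (insert I 𝒯B) h𝒯₂𝒮 h𝒯₂disj A (Finset.mem_insert_of_mem hA𝒯B) z hz
          refine Finset.Subset.antisymm ?_ hsub2'
          intro y hy
          obtain ⟨hyU, h1, h2⟩ := mem_scc'.1 hy
          rw [← hVA]
          exact mem_scc'.2 ⟨hUV hyU, reachIn_mono hUV h1, reachIn_mono hUV h2⟩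
        · have hAD : A ⊆ D := (hABtype A hA).resolve_right hdisjI
          have hzJ : z ∉ J := fun h => Finset.disjoint_left.1 (hdisjJ A hA) hz h
          have hsC : s ∉ scc E U z := by
            intro hsC
            obtain ⟨_, h1, h2⟩ := mem_scc'.1 hsC
            have he : scc E U z = scc E U s := scc_congr' h1 h2
            rw [hsccUs] at he
            exact hzJ (he ▸ self_mem_scc' (hAU hz))
          have hCW : scc E U z ⊆ 𝒲.sup id := by
            intro y hy
            have hyU := scc_subset' hy
            rw [hU] at hyU
            rcases Finset.mem_insert.1 hyU with rfl | h
            · exact absurd hy hsC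
            · exact h
          have hWA : scc E (𝒲.sup id) z = A :=
            hscc 𝒲 h𝒲𝒮 hWdisj A (Finset.mem_union_left _ hA) z hz
          refine Finset.Subset.antisymm ?_ hsub2'
          intro y hy
          have h1 : ReachIn E (scc E U z) z y := reachIn_scc (self_mem_scc' (hAU hz)) hy
          have h2 : ReachIn E (scc E U z) y z := reachIn_scc hy (self_mem_scc' (hAU hz))
          rw [← hWA]
          exact mem_scc'.2 ⟨hCW hy, reachIn_mono hCW h1, reachIn_mono hCW h2⟩
      by_cases hKJ : K = J
      · subst hKJ
        exact hsccJ x hx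
      · exact hscc𝒯₀ K (Finset.mem_erase.2 ⟨hKJ, hK⟩) x hx
  -- same support
  have hsupp : nsupport (insert J 𝒮) = nsupport 𝒮 := by
    apply Finset.Subset.antisymm
    · intro y hy
      obtain ⟨A, hA, hyA⟩ := Finset.mem_sup.1 hy
      rcases Finset.mem_insert.1 hA with rfl | hA
      · exact Finset.mem_sup.2 ⟨I, hI, hJI hyA⟩
      · exact Finset.mem_sup.2 ⟨A, hA, hyA⟩
    · intro y hy
      obtain ⟨A, hA, hyA⟩ := Finset.mem_sup.1 hy
      exact Finset.mem_sup.2 ⟨A, Finset.mem_insert_of_mem hA, hyA⟩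
  have heq := hmax (insert J 𝒮) hnes' hsupp (Finset.subset_insert _ _)
  exact hJnot (heq ▸ Finset.mem_insert_self J 𝒮)

end Key

/-- For a maximal nested collection `𝒮` with support `S`, the map sending each `s ∈ S` to
the smallest member of `𝒮` containing `s` is well defined and a bijection from `S` to `𝒮`. -/
theorem stmt0 (n : ℕ) (E : Fin n → Fin n → Prop) (hE : ∀ i, ¬ E i i)
    (𝒮 : Finset (Finset (Fin n))) (h𝒮 : MaximalNested E 𝒮) :
    ∃ φ : Fin n → Finset (Fin n),
      (∀ s ∈ nsupport 𝒮, φ s ∈ 𝒮 ∧ s ∈ φ s ∧ ∀ J ∈ 𝒮, s ∈ J → φ s ⊆ J) ∧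
      (∀ s ∈ nsupport 𝒮, ∀ t ∈ nsupport 𝒮, φ s = φ t → s = t) ∧
      (∀ I ∈ 𝒮, ∃ s ∈ nsupport 𝒮, φ s = I) := by
  classical
  have hnes := h𝒮.1
  have hex : ∀ s, s ∈ nsupport 𝒮 → ∃ I, I ∈ 𝒮 ∧ s ∈ I ∧ ∀ J ∈ 𝒮, s ∈ J → I ⊆ J := by
    intro s hs
    obtain ⟨I, hI, h1, h2⟩ := exists_min_mem hnes hs
    exact ⟨I, hI, h1, h2⟩
  set φ : Fin n → Finset (Fin n) := fun s =>
    if h : s ∈ nsupport 𝒮 then (hex s h).choose else ∅ with hφ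
  have hφ1 : ∀ s ∈ nsupport 𝒮, φ s ∈ 𝒮 ∧ s ∈ φ s ∧ ∀ J ∈ 𝒮, s ∈ J → φ s ⊆ J := by
    intro s hs
    have hspec := (hex s hs).choose_spec
    have : φ s = (hex s hs).choose := by rw [hφ]; simp only [dif_pos hs]
    rw [this]
    exact hspec
  refine ⟨φ, hφ1, ?_, ?_⟩
  · intro s hs t ht heq
    obtain ⟨h1, h2, h3⟩ := hφ1 s hs
    obtain ⟨h4, h5, h6⟩ := hφ1 t ht
    rw [heq] at h1 h2 h3
    exact key_inj h𝒮 h1 h2 h5 h3 h6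
  · intro I hI
    obtain ⟨s, hsI, hmin⟩ := exists_min_elt hnes hI
    have hs : s ∈ nsupport 𝒮 := mem_nsupport'.2 ⟨I, hI, hsI⟩
    obtain ⟨h1, h2, h3⟩ := hφ1 s hs
    exact ⟨s, hs, Finset.Subset.antisymm (h3 I hI hsI) (hmin (φ s) h1 h2)⟩
end

section
/- Every maximal nested collection 𝒮 with support S can be obtained from the empty collection by a sequence of activations: there is an ordering (s_1,…,s_k) of the elements of S such that, setting 𝒮_0 = ∅ and 𝒮_{r+1} = μ_{s_{r+1}}(𝒮_r) for 0 ≤ r < k, one has 𝒮_k = 𝒮. -/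
open MvPolynomial

/-- Activation of the collection `𝒮` at a vertex `s`: add `(support 𝒮) ⊕ s` to `𝒮`. -/
noncomputable def activate {n : ℕ} (E : Fin n → Fin n → Prop)
    (𝒮 : Finset (Finset (Fin n))) (s : Fin n) : Finset (Finset (Fin n)) :=
  insert (oplus E (nsupport 𝒮) s) 𝒮

namespace SccAux

variable {n : ℕ} {E : Fin n → Fin n → Prop} {U V W : Finset (Fin n)} {a b x y z : Fin n}

lemma reach_mono (h : U ⊆ V) (hr : ReachIn E U a b) : ReachIn E V a b :=
  Relation.ReflTransGen.mono (fun _ _ hxy => ⟨hxy.1, h hxy.2.1, h hxy.2.2⟩) _ _ hr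

lemma reach_mem_right (hr : ReachIn E U a b) (ha : a ∈ U) : b ∈ U := by
  induction hr with
  | refl => exact ha
  | tail _ hstep _ => exact hstep.2.2

lemma mem_scc : y ∈ scc E U x ↔ y ∈ U ∧ ReachIn E U x y ∧ ReachIn E U y x := by
  classical
  rw [scc, Finset.mem_filter]

lemma scc_subset : scc E U x ⊆ U := fun _ hy => (mem_scc.mp hy).1

lemma self_mem_scc (hx : x ∈ U) : x ∈ scc E U x :=
  mem_scc.mpr ⟨hx, .refl, .refl⟩

lemma scc_mono (h : U ⊆ V) : scc E U x ⊆ scc E V x := by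
  intro y hy
  rw [mem_scc] at hy ⊢
  exact ⟨h hy.1, reach_mono h hy.2.1, reach_mono h hy.2.2⟩

lemma reach_confine (hW : ∀ w, ReachIn E V y w → ReachIn E V w y → w ∈ W) :
    ReachIn E V y z → ReachIn E V z y → ReachIn E W y z := by
  intro hyz
  induction hyz with
  | refl => exact fun _ => .refl
  | @tail b c hyb hstep ih =>
    intro hcy
    have hbc : ReachIn E V b c := Relation.ReflTransGen.single hstep
    have hby : ReachIn E V b y := hbc.trans hcy
    exact (ih hby).tail ⟨hstep.1, hW b hyb hby, hW c (hyb.tail hstep) hcy⟩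

lemma scc_eq_of_mem (hz : z ∈ scc E V y) : scc E V z = scc E V y := by
  rw [mem_scc] at hz
  ext w
  rw [mem_scc, mem_scc]
  exact ⟨fun h => ⟨h.1, hz.2.1.trans h.2.1, h.2.2.trans hz.2.2⟩,
    fun h => ⟨h.1, hz.2.2.trans h.2.1, h.2.2.trans hz.2.1⟩⟩

lemma sc_subset_scc (hX : StronglyConnected E U) (hUV : U ⊆ V) (hz : z ∈ U) :
    U ⊆ scc E V z := by
  intro w hw
  exact mem_scc.mpr ⟨hUV hw, reach_mono hUV (hX.2 z hz w hw), reach_mono hUV (hX.2 w hw z hz)⟩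

lemma scc_sc (hx : x ∈ V) : StronglyConnected E (scc E V x) := by
  refine ⟨⟨x, self_mem_scc hx⟩, fun a ha b hb => ?_⟩
  rw [mem_scc] at ha hb
  refine reach_confine (fun w hw₁ hw₂ => mem_scc.mpr
    ⟨reach_mem_right hw₁ ha.1, ha.2.1.trans hw₁, hw₂.trans ha.2.2⟩)
    (ha.2.2.trans hb.2.1) (hb.2.2.trans ha.2.1)

lemma scc_subset_scc (hx : x ∈ V) (h : scc E V x ⊆ W) : scc E V x ⊆ scc E W x := by
  intro z hz
  have hz' := hz
  rw [mem_scc] at hz'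
  refine mem_scc.mpr ⟨h hz, ?_, ?_⟩
  · exact reach_confine (fun w hw₁ hw₂ => h (mem_scc.mpr
      ⟨reach_mem_right hw₁ hx, hw₁, hw₂⟩)) hz'.2.1 hz'.2.2
  · exact reach_confine (fun w hw₁ hw₂ => h (mem_scc.mpr
      ⟨reach_mem_right hw₁ hz'.1, hz'.2.1.trans hw₁, hw₂.trans hz'.2.2⟩)) hz'.2.2 hz'.2.1

end SccAux

namespace SccAux

variable {n : ℕ} {E : Fin n → Fin n → Prop} {𝒮 : Finset (Finset (Fin n))}
  {C I J K X D : Finset (Fin n)} {x s t : Fin n}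

lemma mem_nsupport {y : Fin n} : y ∈ nsupport 𝒮 ↔ ∃ I ∈ 𝒮, y ∈ I := by
  simp [nsupport, Finset.mem_sup]

lemma subset_nsupport (hI : I ∈ 𝒮) : I ⊆ nsupport 𝒮 :=
  fun y hy => mem_nsupport.mpr ⟨I, hI, hy⟩

lemma nested_subset (h : 𝒮 ⊆ 𝒮') (hN : Nested E 𝒮') : Nested E 𝒮 :=
  ⟨fun I hI => hN.1 I (h hI), fun I hI J hJ => hN.2.1 I (h hI) J (h hJ),
    fun 𝒯 h𝒯 => hN.2.2 𝒯 (h𝒯.trans h)⟩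

def IsTop (𝒮 : Finset (Finset (Fin n))) (C : Finset (Fin n)) : Prop :=
  C ∈ 𝒮 ∧ ∀ J ∈ 𝒮, C ⊆ J → J = C

lemma exists_top_above (hI : I ∈ 𝒮) : ∃ C, IsTop 𝒮 C ∧ I ⊆ C := by
  classical
  obtain ⟨m, hm, hmax⟩ := Finset.exists_maximal (s := 𝒮.filter (fun J => I ⊆ J)) ⟨I, by simp [hI]⟩
  rw [Finset.mem_filter] at hm
  refine ⟨m, ⟨hm.1, fun J hJ hmJ => ?_⟩, hm.2⟩
  by_contra hne
  exact hne (le_antisymm (hmax (Finset.mem_filter.mpr ⟨hJ, hm.2.trans hmJ⟩) hmJ) hmJ)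

lemma top_disjoint (hN : Nested E 𝒮) (hC : IsTop 𝒮 C) (hJ : IsTop 𝒮 J) (hne : C ≠ J) :
    Disjoint C J := by
  rcases hN.2.1 C hC.1 J hJ.1 with h | h | h
  · exact absurd (hC.2 J hJ.1 h).symm hne
  · exact absurd (hJ.2 C hC.1 h) hne
  · exact h

lemma top_scc (hN : Nested E 𝒮) (hC : IsTop 𝒮 C) (hx : x ∈ C) :
    scc E (nsupport 𝒮) x = C := by
  classical
  set 𝒯 := 𝒮.filter (fun I => ∀ J ∈ 𝒮, I ⊆ J → J = I) with h𝒯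
  have hsub : 𝒯 ⊆ 𝒮 := Finset.filter_subset _ _
  have hsup : 𝒯.sup id = nsupport 𝒮 := by
    apply Finset.Subset.antisymm
    · intro y hy
      obtain ⟨I, hI, hyI⟩ := Finset.mem_sup.mp hy
      exact mem_nsupport.mpr ⟨I, hsub hI, hyI⟩
    · intro y hy
      obtain ⟨I, hI, hyI⟩ := mem_nsupport.mp hy
      obtain ⟨M, hM, hIM⟩ := exists_top_above hI
      exact Finset.mem_sup.mpr ⟨M, Finset.mem_filter.mpr ⟨hM.1, hM.2⟩, hIM hyI⟩
  have hdisj : ∀ I ∈ 𝒯, ∀ J ∈ 𝒯, I ≠ J → Disjoint I J := by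
    intro I hI J hJ hne
    rw [Finset.mem_filter] at hI hJ
    exact top_disjoint hN ⟨hI.1, hI.2⟩ ⟨hJ.1, hJ.2⟩ hne
  have := hN.2.2 𝒯 hsub hdisj C (Finset.mem_filter.mpr ⟨hC.1, hC.2⟩) x hx
  rwa [hsup] at this

open Classical in
noncomputable def kids (𝒮 : Finset (Finset (Fin n))) (C : Finset (Fin n)) :
    Finset (Finset (Fin n)) :=
  𝒮.filter (fun K => K ⊂ C ∧ ∀ J ∈ 𝒮, K ⊆ J → J ⊂ C → J = K)

noncomputable def UC (𝒮 : Finset (Finset (Fin n))) (C : Finset (Fin n)) : Finset (Fin n) :=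
  (kids 𝒮 C).sup id

lemma mem_kids : K ∈ kids 𝒮 C ↔
    K ∈ 𝒮 ∧ K ⊂ C ∧ ∀ J ∈ 𝒮, K ⊆ J → J ⊂ C → J = K := by
  classical
  rw [kids, Finset.mem_filter]

lemma kids_subset : kids 𝒮 C ⊆ 𝒮 := fun K hK => (mem_kids.mp hK).1

lemma UC_subset : UC 𝒮 C ⊆ C := by
  intro y hy
  obtain ⟨K, hK, hyK⟩ := Finset.mem_sup.mp hy
  exact (mem_kids.mp hK).2.1.subset hyK

lemma subset_UC (hX : X ∈ 𝒮) (hXC : X ⊂ C) : X ⊆ UC 𝒮 C := by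
  classical
  obtain ⟨m, hm, hmax⟩ := Finset.exists_maximal
    (s := 𝒮.filter (fun J => X ⊆ J ∧ J ⊂ C)) ⟨X, by simp [hX, hXC, Finset.Subset.rfl]⟩
  rw [Finset.mem_filter] at hm
  have hmk : m ∈ kids 𝒮 C := by
    refine mem_kids.mpr ⟨hm.1, hm.2.2, fun J hJ hmJ hJC => ?_⟩
    by_contra hne
    exact hne (le_antisymm (hmax (Finset.mem_filter.mpr ⟨hJ, hm.2.1.trans hmJ, hJC⟩) hmJ)
      hmJ)
  exact fun y hy => Finset.mem_sup.mpr ⟨m, hmk, hm.2.1 hy⟩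

lemma kids_disjoint (hN : Nested E 𝒮) (hK : K ∈ kids 𝒮 C) (hJ : J ∈ kids 𝒮 C)
    (hne : K ≠ J) : Disjoint K J := by
  rw [mem_kids] at hK hJ
  rcases hN.2.1 K hK.1 J hJ.1 with h | h | h
  · exact absurd (hK.2.2 J hJ.1 h hJ.2.1).symm hne
  · exact absurd (hJ.2.2 K hK.1 h hK.2.1) hne
  · exact h

lemma priv_nonempty (hN : Nested E 𝒮) (hC : C ∈ 𝒮) : (C \ UC 𝒮 C).Nonempty := by
  rw [Finset.sdiff_nonempty]
  intro hCU
  have hUC : UC 𝒮 C = C := Finset.Subset.antisymm UC_subset hCU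
  obtain ⟨x, hx⟩ := (hN.1 C hC).1
  have hkne : (kids 𝒮 C).Nonempty := by
    rcases Finset.eq_empty_or_nonempty (kids 𝒮 C) with h | h
    · exfalso
      rw [UC, h, Finset.sup_empty] at hUC
      rw [← hUC] at hx
      simp at hx
    · exact h
  obtain ⟨K, hK⟩ := hkne
  obtain ⟨y, hy⟩ := (hN.1 K (kids_subset hK)).1
  have := hN.2.2 (kids 𝒮 C) kids_subset (fun A hA B hB => kids_disjoint hN hA hB) K hK y hy
  rw [show (kids 𝒮 C).sup id = C from hUC] at this
  have hCscc : scc E C y = C := by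
    have hyC : y ∈ C := (mem_kids.mp hK).2.1.subset hy
    exact Finset.Subset.antisymm scc_subset (sc_subset_scc (hN.1 C hC) Finset.Subset.rfl hyC)
  rw [hCscc] at this
  exact (mem_kids.mp hK).2.1.ne this.symm

lemma superset_of_priv (hN : Nested E 𝒮) (hC : C ∈ 𝒮) (hs : s ∈ C \ UC 𝒮 C)
    (hX : X ∈ 𝒮) (hsX : s ∈ X) : C ⊆ X := by
  rw [Finset.mem_sdiff] at hs
  rcases hN.2.1 X hX C hC with h | h | h
  · rcases eq_or_ne X C with rfl | hne
    · exact Finset.Subset.rfl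
    · exact absurd (subset_UC hX (h.ssubset_of_ne hne) hsX) hs.2
  · exact h
  · exact absurd hsX (Finset.disjoint_right.mp h hs.1)

end SccAux

namespace SccAux

variable {n : ℕ} {E : Fin n → Fin n → Prop} {𝒮 : Finset (Finset (Fin n))}
  {C I J K X D : Finset (Fin n)} {x s t : Fin n}

lemma priv_subsingleton (hM : MaximalNested E 𝒮) (htop : IsTop 𝒮 C)
    (hs : s ∈ C \ UC 𝒮 C) (ht : t ∈ C \ UC 𝒮 C) : s = t := by
  classical
  by_contra hst
  obtain ⟨hN, hmax⟩ := hM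
  have hC := htop.1
  have hsC : s ∈ C := (Finset.mem_sdiff.mp hs).1
  have htC : t ∈ C := (Finset.mem_sdiff.mp ht).1
  set W := C.erase t with hW
  have hsW : s ∈ W := Finset.mem_erase.mpr ⟨hst, hsC⟩
  have hWC : W ⊆ C := Finset.erase_subset _ _
  set D := scc E W s with hD
  have hsD : s ∈ D := self_mem_scc hsW
  have hDW : D ⊆ W := scc_subset
  have hDC : D ⊆ C := hDW.trans hWC
  have htD : t ∉ D := fun h => (Finset.mem_erase.mp (hDW h)).1 rfl
  have hDsc : StronglyConnected E D := scc_sc hsW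
  have hDnot : D ∉ 𝒮 := fun h => htD (superset_of_priv hN hC hs h hsD htC)
  have hUCW : UC 𝒮 C ⊆ W := fun y hy => Finset.mem_erase.mpr
    ⟨fun h => (Finset.mem_sdiff.mp ht).2 (h ▸ hy), UC_subset hy⟩
  -- trichotomy of D vs members of 𝒮
  have htri : ∀ X ∈ 𝒮, D ⊆ X ∨ X ⊆ D ∨ Disjoint X D := by
    intro X hX
    rcases hN.2.1 X hX C hC with h | h | h
    · rcases eq_or_ne X C with rfl | hne
      · exact Or.inl hDC
      · have hXW : X ⊆ W := (subset_UC hX (h.ssubset_of_ne hne)).trans hUCW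
        rcases Finset.disjoint_or_nonempty_inter X D with hd | ⟨z, hz⟩
        · exact Or.inr (Or.inr hd)
        · rw [Finset.mem_inter] at hz
          refine Or.inr (Or.inl ?_)
          have h1 : X ⊆ scc E W z := sc_subset_scc (hN.1 X hX) hXW hz.1
          rwa [scc_eq_of_mem hz.2] at h1
    · exact Or.inl (hDC.trans h)
    · exact Or.inr (Or.inr (h.mono_right hDC))
  have hSS : nsupport 𝒮 = nsupport 𝒮 := rfl
  -- t is in no member of 𝒮 other than supersets of C
  have htmem : ∀ X ∈ 𝒮, t ∈ X → C ⊆ X := fun X hX h => superset_of_priv hN hC ht hX h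
  -- Nestedness of insert D 𝒮
  have hkey : Nested E (insert D 𝒮) := by
    refine ⟨?_, ?_, ?_⟩
    · intro I hI
      rcases Finset.mem_insert.mp hI with rfl | hI
      · exact hDsc
      · exact hN.1 I hI
    · intro I hI J hJ
      rcases Finset.mem_insert.mp hI with rfl | hI <;> rcases Finset.mem_insert.mp hJ with rfl | hJ
      · exact Or.inl Finset.Subset.rfl
      · rcases htri J hJ with h | h | h
        · exact Or.inl h
        · exact Or.inr (Or.inl h)
        · exact Or.inr (Or.inr h.symm)
      · rcases htri I hI with h | h | h
        · exact Or.inr (Or.inl h)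
        · exact Or.inl h
        · exact Or.inr (Or.inr h)
      · exact hN.2.1 I hI J hJ
    · intro 𝒯 h𝒯 hdisj I hI x hx
      by_cases hD𝒯 : D ∈ 𝒯
      · set 𝒯₀ := 𝒯.erase D with h𝒯₀def
        have h𝒯₀ : 𝒯₀ ⊆ 𝒮 := by
          intro Y hY
          rcases Finset.mem_insert.mp (h𝒯 (Finset.mem_of_mem_erase hY)) with rfl | h
          · exact absurd rfl (Finset.mem_erase.mp hY).1
          · exact h
        set V := 𝒯.sup id with hV
        set V0 := 𝒯₀.sup id with hV0
        have hVsplit : V = D ∪ V0 := by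
          rw [hV, ← Finset.insert_erase hD𝒯, Finset.sup_insert, Finset.sup_eq_union]
          rfl
        have hdisjD : ∀ Y ∈ 𝒯₀, Disjoint Y D := fun Y hY =>
          hdisj Y (Finset.mem_of_mem_erase hY) D hD𝒯 (Finset.mem_erase.mp hY).1
        have htV : t ∉ V := by
          rw [hVsplit, Finset.mem_union]
          rintro (h | h)
          · exact htD h
          · obtain ⟨Y, hY, htY⟩ := Finset.mem_sup.mp h
            exact Finset.disjoint_left.mp (hdisjD Y hY) (htmem Y (h𝒯₀ hY) htY hsC) hsD
        have hVS : V ⊆ nsupport 𝒮 := by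
          intro y hy
          obtain ⟨Y, hY, hyY⟩ := Finset.mem_sup.mp hy
          rcases Finset.mem_insert.mp (h𝒯 hY) with rfl | h
          · exact subset_nsupport hC (hDC hyY)
          · exact subset_nsupport h hyY
        have hDV : D ⊆ V := by rw [hVsplit]; exact Finset.subset_union_left
        have hstep1 : ∀ d ∈ D, scc E V d = D := by
          intro d hd
          have hdC : d ∈ C := hDC hd
          have h1 : scc E V d ⊆ C := by
            have h' := scc_mono (E := E) (x := d) hVS
            rwa [top_scc hN htop hdC] at h'
          have h2 : scc E V d ⊆ V ∩ W := by
            intro y hy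
            refine Finset.mem_inter.mpr ⟨scc_subset hy, Finset.mem_erase.mpr
              ⟨fun h => htV (h ▸ scc_subset hy), h1 hy⟩⟩
          have h3 : scc E V d ⊆ scc E (V ∩ W) d := scc_subset_scc (hDV hd) h2
          have h4 : scc E (V ∩ W) d ⊆ scc E W d := scc_mono Finset.inter_subset_right
          have h5 : scc E W d = D := scc_eq_of_mem hd
          exact Finset.Subset.antisymm (h3.trans (fun y hy => h5 ▸ h4 hy))
            (sc_subset_scc hDsc hDV hd)
        rcases eq_or_ne I D with rfl | hID
        · exact hstep1 x hx
        · have hI0 : I ∈ 𝒯₀ := Finset.mem_erase.mpr ⟨hID, hI⟩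
          have hIV : I ⊆ V := fun y hy => Finset.mem_sup.mpr ⟨I, hI, hy⟩
          have hxV : x ∈ V := hIV hx
          have hnotD : ∀ d ∈ D, d ∉ scc E V x := by
            intro d hd hmem
            have h1 : scc E V x = D := by rw [← scc_eq_of_mem hmem, hstep1 d hd]
            exact Finset.disjoint_left.mp (hdisjD I hI0) hx (h1 ▸ self_mem_scc hxV)
          have hsub0 : scc E V x ⊆ V0 := by
            intro y hy
            have hyV : y ∈ V := scc_subset hy
            rw [hVsplit, Finset.mem_union] at hyV
            rcases hyV with h | h
            · exact absurd hy (hnotD y h)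
            · exact h
          have h6 : scc E V x ⊆ scc E V0 x := scc_subset_scc hxV hsub0
          have h7 : scc E V0 x = I := hN.2.2 𝒯₀ h𝒯₀
            (fun A hA B hB => hdisj A (Finset.mem_of_mem_erase hA) B (Finset.mem_of_mem_erase hB))
            I hI0 x hx
          exact Finset.Subset.antisymm (fun y hy => h7 ▸ h6 hy) (sc_subset_scc (hN.1 I (h𝒯₀ hI0)) hIV hx)
      · refine hN.2.2 𝒯 (fun Y hY => ?_) hdisj I hI x hx
        rcases Finset.mem_insert.mp (h𝒯 hY) with rfl | h
        · exact absurd hY hD𝒯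
        · exact h
  have hsupp : nsupport (insert D 𝒮) = nsupport 𝒮 := by
    apply Finset.Subset.antisymm
    · intro y hy
      obtain ⟨Y, hY, hyY⟩ := mem_nsupport.mp hy
      rcases Finset.mem_insert.mp hY with rfl | h
      · exact subset_nsupport hC (hDC hyY)
      · exact subset_nsupport h hyY
    · intro y hy
      obtain ⟨Y, hY, hyY⟩ := mem_nsupport.mp hy
      exact mem_nsupport.mpr ⟨Y, Finset.mem_insert_of_mem hY, hyY⟩
  have := hmax (insert D 𝒮) hkey hsupp (Finset.subset_insert _ _)
  exact hDnot (this ▸ Finset.mem_insert_self D 𝒮)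

end SccAux

namespace SccAux

variable {n : ℕ} {E : Fin n → Fin n → Prop} {𝒮 : Finset (Finset (Fin n))}
  {C I J K X D : Finset (Fin n)} {x s t : Fin n}

lemma erase_top (hM : MaximalNested E 𝒮) (htop : IsTop 𝒮 C)
    (hpriv : C \ UC 𝒮 C = {s}) :
    MaximalNested E (𝒮.erase C) ∧ nsupport (𝒮.erase C) = (nsupport 𝒮).erase s := by
  classical
  obtain ⟨hN, hmax⟩ := hM
  have hC := htop.1
  have hs : s ∈ C \ UC 𝒮 C := hpriv ▸ Finset.mem_singleton_self s
  have hsC : s ∈ C := (Finset.mem_sdiff.mp hs).1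
  have hsS : s ∈ nsupport 𝒮 := subset_nsupport hC hsC
  have hmemC : ∀ X ∈ 𝒮, s ∈ X → X = C := fun X hX h =>
    htop.2 X hX (superset_of_priv hN hC hs hX h)
  have hsupp : nsupport (𝒮.erase C) = (nsupport 𝒮).erase s := by
    apply Finset.Subset.antisymm
    · intro y hy
      obtain ⟨Y, hY, hyY⟩ := mem_nsupport.mp hy
      have hYne := (Finset.mem_erase.mp hY).1
      have hY𝒮 := Finset.mem_of_mem_erase hY
      refine Finset.mem_erase.mpr ⟨fun h => hYne (hmemC Y hY𝒮 (h ▸ hyY)), subset_nsupport hY𝒮 hyY⟩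
    · intro y hy
      obtain ⟨hys, hyS⟩ := Finset.mem_erase.mp hy
      obtain ⟨Y, hY, hyY⟩ := mem_nsupport.mp hyS
      rcases eq_or_ne Y C with rfl | hne
      · have hyUC : y ∈ UC 𝒮 Y := by
          by_contra h
          have : y ∈ Y \ UC 𝒮 Y := Finset.mem_sdiff.mpr ⟨hyY, h⟩
          rw [hpriv, Finset.mem_singleton] at this
          exact hys this
        obtain ⟨M, hMk, hyM⟩ := Finset.mem_sup.mp hyUC
        have hM𝒮 := kids_subset hMk
        have hMne : M ≠ Y := (mem_kids.mp hMk).2.1.ne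
        exact mem_nsupport.mpr ⟨M, Finset.mem_erase.mpr ⟨hMne, hM𝒮⟩, hyM⟩
      · exact mem_nsupport.mpr ⟨Y, Finset.mem_erase.mpr ⟨hne, hY⟩, hyY⟩
  have hN' : Nested E (𝒮.erase C) := nested_subset (Finset.erase_subset _ _) hN
  refine ⟨⟨hN', ?_⟩, hsupp⟩
  intro 𝒮'' hN'' hsupp'' hsub''
  rw [hsupp] at hsupp''
  have hCnot : C ∉ 𝒮'' := by
    intro h
    have : s ∈ nsupport 𝒮'' := subset_nsupport h hsC
    rw [hsupp''] at this
    exact (Finset.mem_erase.mp this).1 rfl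
  -- every member of 𝒮'' is inside a top of 𝒮
  have hXtop : ∀ X ∈ 𝒮'', ∃ C', IsTop 𝒮 C' ∧ X ⊆ C' := by
    intro X hX
    obtain ⟨x, hx⟩ := (hN''.1 X hX).1
    have hxS : x ∈ nsupport 𝒮 := by
      have := subset_nsupport hX hx
      rw [hsupp''] at this
      exact Finset.mem_of_mem_erase this
    obtain ⟨I, hI, hxI⟩ := mem_nsupport.mp hxS
    obtain ⟨C', htop', hIC'⟩ := exists_top_above hI
    refine ⟨C', htop', ?_⟩
    have hXS : X ⊆ nsupport 𝒮 := fun y hy =>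
      Finset.mem_of_mem_erase (hsupp'' ▸ subset_nsupport hX hy)
    have h1 : X ⊆ scc E (nsupport 𝒮) x := sc_subset_scc (hN''.1 X hX) hXS hx
    rwa [top_scc hN htop' (hIC' hxI)] at h1
  have hkey : Nested E (insert C 𝒮'') := by
    refine ⟨?_, ?_, ?_⟩
    · intro I hI
      rcases Finset.mem_insert.mp hI with hIc | hI
      · exact hIc ▸ hN.1 C hC
      · exact hN''.1 I hI
    · have htriC : ∀ X ∈ 𝒮'', X ⊆ C ∨ Disjoint X C := by
        intro X hX
        obtain ⟨C', htop', hXC'⟩ := hXtop X hX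
        rcases eq_or_ne C' C with rfl | hne
        · exact Or.inl hXC'
        · exact Or.inr (Finset.disjoint_left.mpr fun {a} ha hb =>
            Finset.disjoint_left.mp (top_disjoint hN htop' htop hne) (hXC' ha) hb)
      intro I hI J hJ
      rcases Finset.mem_insert.mp hI with hIc | hI <;> rcases Finset.mem_insert.mp hJ with hJc | hJ
      · rw [hIc, hJc]; exact Or.inl Finset.Subset.rfl
      · rw [hIc]
        rcases htriC J hJ with h | h
        · exact Or.inr (Or.inl h)
        · exact Or.inr (Or.inr h.symm)
      · rw [hJc]
        rcases htriC I hI with h | h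
        · exact Or.inl h
        · exact Or.inr (Or.inr h)
      · exact hN''.2.1 I hI J hJ
    · intro 𝒯 h𝒯 hdisj I hI x hx
      by_cases hC𝒯 : C ∈ 𝒯
      · set 𝒯₀ := 𝒯.erase C with h𝒯₀def
        have h𝒯₀ : 𝒯₀ ⊆ 𝒮'' := by
          intro Y hY
          rcases Finset.mem_insert.mp (h𝒯 (Finset.mem_of_mem_erase hY)) with rfl | h
          · exact absurd rfl (Finset.mem_erase.mp hY).1
          · exact h
        set V := 𝒯.sup id with hV
        set V0 := 𝒯₀.sup id with hV0
        have hVsplit : V = C ∪ V0 := by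
          rw [hV, ← Finset.insert_erase hC𝒯, Finset.sup_insert, Finset.sup_eq_union]
          rfl
        have hdisjC : ∀ Y ∈ 𝒯₀, Disjoint Y C := fun Y hY =>
          hdisj Y (Finset.mem_of_mem_erase hY) C hC𝒯 (Finset.mem_erase.mp hY).1
        have hVS : V ⊆ nsupport 𝒮 := by
          intro y hy
          obtain ⟨Y, hY, hyY⟩ := Finset.mem_sup.mp hy
          rcases Finset.mem_insert.mp (h𝒯 hY) with rfl | h
          · exact subset_nsupport hC hyY
          · exact Finset.mem_of_mem_erase (hsupp'' ▸ subset_nsupport h hyY)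
        have hCV : C ⊆ V := by rw [hVsplit]; exact Finset.subset_union_left
        have hstep1 : ∀ d ∈ C, scc E V d = C := by
          intro d hd
          have h1 : scc E V d ⊆ C := by
            have h' := scc_mono (E := E) (x := d) hVS
            rwa [top_scc hN htop hd] at h'
          exact Finset.Subset.antisymm h1 (sc_subset_scc (hN.1 C hC) hCV hd)
        rcases eq_or_ne I C with rfl | hIC
        · exact hstep1 x hx
        · have hI0 : I ∈ 𝒯₀ := Finset.mem_erase.mpr ⟨hIC, hI⟩
          have hIV : I ⊆ V := fun y hy => Finset.mem_sup.mpr ⟨I, hI, hy⟩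
          have hxV : x ∈ V := hIV hx
          have hnotC : ∀ d ∈ C, d ∉ scc E V x := by
            intro d hd hmem
            have h1 : scc E V x = C := by rw [← scc_eq_of_mem hmem, hstep1 d hd]
            exact Finset.disjoint_left.mp (hdisjC I hI0) hx (h1 ▸ self_mem_scc hxV)
          have hsub0 : scc E V x ⊆ V0 := by
            intro y hy
            have hyV : y ∈ V := scc_subset hy
            rw [hVsplit, Finset.mem_union] at hyV
            rcases hyV with h | h
            · exact absurd hy (hnotC y h)
            · exact h
          have h6 : scc E V x ⊆ scc E V0 x := scc_subset_scc hxV hsub0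
          have h7 : scc E V0 x = I := hN''.2.2 𝒯₀ h𝒯₀
            (fun A hA B hB => hdisj A (Finset.mem_of_mem_erase hA) B (Finset.mem_of_mem_erase hB))
            I hI0 x hx
          exact Finset.Subset.antisymm (fun y hy => h7 ▸ h6 hy)
            (sc_subset_scc (hN''.1 I (h𝒯₀ hI0)) hIV hx)
      · refine hN''.2.2 𝒯 (fun Y hY => ?_) hdisj I hI x hx
        rcases Finset.mem_insert.mp (h𝒯 hY) with rfl | h
        · exact absurd hY hC𝒯
        · exact h
  have hsupp2 : nsupport (insert C 𝒮'') = nsupport 𝒮 := by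
    apply Finset.Subset.antisymm
    · intro y hy
      obtain ⟨Y, hY, hyY⟩ := mem_nsupport.mp hy
      rcases Finset.mem_insert.mp hY with rfl | h
      · exact subset_nsupport hC hyY
      · exact Finset.mem_of_mem_erase (hsupp'' ▸ subset_nsupport h hyY)
    · intro y hy
      rcases eq_or_ne y s with rfl | hne
      · exact mem_nsupport.mpr ⟨C, Finset.mem_insert_self _ _, hsC⟩
      · have : y ∈ nsupport 𝒮'' := hsupp'' ▸ Finset.mem_erase.mpr ⟨hne, hy⟩
        obtain ⟨Y, hY, hyY⟩ := mem_nsupport.mp this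
        exact mem_nsupport.mpr ⟨Y, Finset.mem_insert_of_mem hY, hyY⟩
  have hsub2 : 𝒮 ⊆ insert C 𝒮'' := by
    intro I hI
    rcases eq_or_ne I C with rfl | hne
    · exact Finset.mem_insert_self _ _
    · exact Finset.mem_insert_of_mem (hsub'' (Finset.mem_erase.mpr ⟨hne, hI⟩))
  have heq : insert C 𝒮'' = 𝒮 := hmax _ hkey hsupp2 hsub2
  apply Finset.Subset.antisymm
  · intro X hX
    have hX𝒮 : X ∈ 𝒮 := heq ▸ Finset.mem_insert_of_mem hX
    exact Finset.mem_erase.mpr ⟨fun h => hCnot (h ▸ hX), hX𝒮⟩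
  · exact hsub''

end SccAux


open SccAux

/-- Every maximal nested collection is obtained from the empty collection by activating
the elements of its support in some order. -/
theorem stmt2 (n : ℕ) (E : Fin n → Fin n → Prop) (hE : ∀ i, ¬ E i i)
    (𝒮 : Finset (Finset (Fin n))) (h𝒮 : MaximalNested E 𝒮) :
    ∃ l : List (Fin n), l.Nodup ∧ l.toFinset = nsupport 𝒮 ∧
      l.foldl (activate E) ∅ = 𝒮 := by
  classical
  suffices h : ∀ m (𝒮 : Finset (Finset (Fin n))), MaximalNested E 𝒮 →
      (nsupport 𝒮).card ≤ m →
      ∃ l : List (Fin n), l.Nodup ∧ l.toFinset = nsupport 𝒮 ∧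
        l.foldl (activate E) ∅ = 𝒮 by
    exact h (nsupport 𝒮).card 𝒮 h𝒮 le_rfl
  intro m
  induction m with
  | zero =>
    intro 𝒮 hM hcard
    have hS : nsupport 𝒮 = ∅ := Finset.card_eq_zero.mp (Nat.le_zero.mp hcard)
    have h𝒮e : 𝒮 = ∅ := by
      rw [Finset.eq_empty_iff_forall_notMem]
      intro I hI
      obtain ⟨x, hx⟩ := (hM.1.1 I hI).1
      have := subset_nsupport hI hx
      rw [hS] at this
      simp at this
    exact ⟨[], List.nodup_nil, by simp [h𝒮e, hS, nsupport], by simp [h𝒮e]⟩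
  | succ m ih =>
    intro 𝒮 hM hcard
    rcases Finset.eq_empty_or_nonempty (nsupport 𝒮) with hS | hS
    · exact ih 𝒮 hM (by rw [hS]; simp)
    · obtain ⟨x, hx⟩ := hS
      obtain ⟨I, hI, hxI⟩ := mem_nsupport.mp hx
      obtain ⟨C, htop, hIC⟩ := exists_top_above hI
      obtain ⟨s, hs⟩ := priv_nonempty hM.1 htop.1
      have hpriv : C \ UC 𝒮 C = {s} := by
        apply Finset.eq_singleton_iff_unique_mem.mpr
        exact ⟨hs, fun y hy => priv_subsingleton hM htop hy hs⟩
      obtain ⟨hM', hsupp'⟩ := erase_top hM htop hpriv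
      have hsC : s ∈ C := (Finset.mem_sdiff.mp hs).1
      have hsS : s ∈ nsupport 𝒮 := subset_nsupport htop.1 hsC
      have hcard' : (nsupport (𝒮.erase C)).card ≤ m := by
        rw [hsupp', Finset.card_erase_of_mem hsS]
        omega
      obtain ⟨l, hnd, htf, hfold⟩ := ih _ hM' hcard'
      have hsl : s ∉ l := by
        intro h
        have : s ∈ l.toFinset := List.mem_toFinset.mpr h
        rw [htf, hsupp'] at this
        exact (Finset.mem_erase.mp this).1 rfl
      refine ⟨l ++ [s], ?_, ?_, ?_⟩
      · rw [List.nodup_append]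
        exact ⟨hnd, List.nodup_singleton s, by simp only [List.mem_singleton]; rintro a ha b rfl rfl; exact hsl ha⟩
      · rw [List.toFinset_append, htf, hsupp']
        ext y
        simp only [Finset.mem_union, Finset.mem_erase, List.toFinset_cons,
          List.toFinset_nil, LawfulSingleton.insert_empty_eq, Finset.mem_singleton]
        constructor
        · rintro (⟨_, h⟩ | rfl)
          · exact h
          · exact hsS
        · intro hy
          rcases eq_or_ne y s with rfl | hne
          · exact Or.inr rfl
          · exact Or.inl ⟨hne, hy⟩
      · rw [List.foldl_append, hfold]
        show insert (oplus E (nsupport (𝒮.erase C)) s) (𝒮.erase C) = 𝒮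
        rw [hsupp', oplus, Finset.insert_erase hsS, top_scc hM.1 htop hsC,
          Finset.insert_erase htop.1]
end

section
/- Let 𝒮 be a maximal nested collection with support S and let s ∈ S − S^max. Then the internal mutation μ_s(𝒮), obtained from 𝒮 by removing S_s and adding (S_{s^+} − {s}) ⊕ s^+, is a maximal nested collection with support S. Furthermore, μ_s(𝒮) is the unique maximal nested collection with support S, other than 𝒮 itself, that contains all the members S_r of 𝒮 with r ≠ s. -/
open MvPolynomial

open Classical in
/-- `S_s`: the smallest member of `𝒮` containing `s` (junk value `∅` if there is none). -/
noncomputable def minMem {n : ℕ} (𝒮 : Finset (Finset (Fin n))) (s : Fin n) :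
    Finset (Fin n) :=
  if h : ∃ I, I ∈ 𝒮 ∧ s ∈ I ∧ ∀ J ∈ 𝒮, s ∈ J → I ⊆ J then h.choose else ∅

namespace NestedProof

variable {n : ℕ} {E : Fin n → Fin n → Prop}

theorem reachIn_mono {U U' : Finset (Fin n)} (h : U ⊆ U') {a b : Fin n}
    (hab : ReachIn E U a b) : ReachIn E U' a b :=
  Relation.ReflTransGen.mono (r := fun x y => E x y ∧ x ∈ U ∧ y ∈ U)
    (p := fun x y => E x y ∧ x ∈ U' ∧ y ∈ U') (fun _ _ hxy => ⟨hxy.1, h hxy.2.1, h hxy.2.2⟩) _ _ hab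

theorem reachIn_mem {U : Finset (Fin n)} {a b : Fin n} (hab : ReachIn E U a b)
    (ha : a ∈ U) : b ∈ U := by
  induction hab with
  | refl => exact ha
  | tail _ h ih => exact h.2.2

theorem mem_scc {U : Finset (Fin n)} {x y : Fin n} :
    y ∈ scc E U x ↔ y ∈ U ∧ ReachIn E U x y ∧ ReachIn E U y x := by
  classical
  constructor
  · intro h
    have h' := Finset.mem_filter.1 h
    exact ⟨h'.1, h'.2⟩
  · intro h
    exact Finset.mem_filter.2 ⟨h.1, h.2⟩

theorem scc_subset {U : Finset (Fin n)} {x : Fin n} : scc E U x ⊆ U :=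
  fun _ hy => (mem_scc.1 hy).1

theorem self_mem_scc {U : Finset (Fin n)} {x : Fin n} (hx : x ∈ U) : x ∈ scc E U x :=
  mem_scc.2 ⟨hx, .refl, .refl⟩

theorem reachIn_scc {U : Finset (Fin n)} {x a b : Fin n}
    (hab : ReachIn E U a b) (hbx : ReachIn E U b x) :
    ReachIn E U x a → ReachIn E (scc E U x) a b := by
  induction hab using Relation.ReflTransGen.head_induction_on with
  | refl => intro _; exact .refl
  | head hac hcb ih =>
    intro hxa
    rename_i a c
    have hacR : ReachIn E U a c := Relation.ReflTransGen.single hac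
    have haU : a ∈ scc E U x := mem_scc.2 ⟨hac.2.1, hxa, hacR.trans (hcb.trans hbx)⟩
    have hcU : c ∈ scc E U x := mem_scc.2 ⟨hac.2.2, hxa.trans hacR, hcb.trans hbx⟩
    exact Relation.ReflTransGen.head ⟨hac.1, haU, hcU⟩ (ih (hxa.trans hacR))

theorem scc_stronglyConnected {U : Finset (Fin n)} {x : Fin n} (hx : x ∈ U) :
    StronglyConnected E (scc E U x) := by
  refine ⟨⟨x, self_mem_scc hx⟩, fun a ha b hb => ?_⟩
  obtain ⟨-, hxa, hax⟩ := mem_scc.1 ha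
  obtain ⟨-, hxb, hbx⟩ := mem_scc.1 hb
  exact reachIn_scc (hax.trans hxb) hbx hxa

theorem scc_eq_of_mem {U : Finset (Fin n)} {x y : Fin n} (hy : y ∈ scc E U x) :
    scc E U y = scc E U x := by
  obtain ⟨hyU, hxy, hyx⟩ := mem_scc.1 hy
  ext z
  simp only [mem_scc]
  exact ⟨fun ⟨hz, h1, h2⟩ => ⟨hz, hxy.trans h1, h2.trans hyx⟩,
    fun ⟨hz, h1, h2⟩ => ⟨hz, hyx.trans h1, h2.trans hxy⟩⟩

theorem sc_subset_scc {U I : Finset (Fin n)} {z : Fin n} (hI : StronglyConnected E I)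
    (hIU : I ⊆ U) (hz : z ∈ I) : I ⊆ scc E U z := by
  intro y hy
  exact mem_scc.2 ⟨hIU hy, reachIn_mono hIU (hI.2 z hz y hy), reachIn_mono hIU (hI.2 y hy z hz)⟩

theorem scc_self_eq {I : Finset (Fin n)} {x : Fin n} (hI : StronglyConnected E I)
    (hx : x ∈ I) : scc E I x = I :=
  subset_antisymm scc_subset (sc_subset_scc hI subset_rfl hx)

theorem nested_subset {𝒮 𝒮' : Finset (Finset (Fin n))} (h : Nested E 𝒮) (hsub : 𝒮' ⊆ 𝒮) :
    Nested E 𝒮' :=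
  ⟨fun I hI => h.1 I (hsub hI), fun I hI J hJ => h.2.1 I (hsub hI) J (hsub hJ),
    fun 𝒯 h𝒯 => h.2.2 𝒯 (h𝒯.trans hsub)⟩

theorem mem_nsupport {𝒮 : Finset (Finset (Fin n))} {x : Fin n} :
    x ∈ nsupport 𝒮 ↔ ∃ I ∈ 𝒮, x ∈ I := by
  simp [nsupport, Finset.mem_sup]

theorem subset_nsupport {𝒮 : Finset (Finset (Fin n))} {I : Finset (Fin n)} (hI : I ∈ 𝒮) :
    I ⊆ nsupport 𝒮 := fun _ hx => mem_nsupport.2 ⟨I, hI, hx⟩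

theorem minMem_spec {𝒮 : Finset (Finset (Fin n))} (h : Nested E 𝒮) {s : Fin n}
    (hs : s ∈ nsupport 𝒮) :
    minMem 𝒮 s ∈ 𝒮 ∧ s ∈ minMem 𝒮 s ∧ ∀ J ∈ 𝒮, s ∈ J → minMem 𝒮 s ⊆ J := by
  classical
  have hex : ∃ I, I ∈ 𝒮 ∧ s ∈ I ∧ ∀ J ∈ 𝒮, s ∈ J → I ⊆ J := by
    obtain ⟨I0, hI0, hsI0⟩ := mem_nsupport.1 hs
    have hne : (𝒮.filter fun J => s ∈ J).Nonempty := ⟨I0, Finset.mem_filter.2 ⟨hI0, hsI0⟩⟩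
    obtain ⟨m, hm, hmin⟩ : ∃ m ∈ 𝒮.filter (fun J => s ∈ J), ∀ x ∈ 𝒮.filter (fun J => s ∈ J), ¬ x < m := by
      obtain ⟨m, hm1, hm2⟩ := Finset.exists_minimal hne
      exact ⟨m, hm1, fun x hx hlt => hlt.not_ge (hm2 hx hlt.le)⟩
    obtain ⟨hm𝒮, hsm⟩ := Finset.mem_filter.1 hm
    refine ⟨m, hm𝒮, hsm, fun J hJ hsJ => ?_⟩
    rcases h.2.1 m hm𝒮 J hJ with h1 | h1 | h1
    · exact h1
    · rcases eq_or_ne J m with rfl | hne'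
      · exact subset_rfl
      · exact absurd (lt_of_le_of_ne h1 hne') (hmin J (Finset.mem_filter.2 ⟨hJ, hsJ⟩))
    · exact absurd hsm (Finset.disjoint_right.1 h1 hsJ)
  rw [minMem, dif_pos hex]
  exact hex.choose_spec

/-- union of the proper submembers of `I`. -/
noncomputable def Usub (𝒮 : Finset (Finset (Fin n))) (I : Finset (Fin n)) : Finset (Fin n) :=
  open Classical in (𝒮.filter fun K => K ⊂ I).sup id

theorem mem_Usub {𝒮 : Finset (Finset (Fin n))} {I : Finset (Fin n)} {x : Fin n} :
    x ∈ Usub 𝒮 I ↔ ∃ K ∈ 𝒮, K ⊂ I ∧ x ∈ K := by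
  classical
  simp only [Usub, Finset.mem_sup, Finset.mem_filter, id]
  constructor
  · rintro ⟨K, ⟨h1, h2⟩, h3⟩; exact ⟨K, h1, h2, h3⟩
  · rintro ⟨K, h1, h2, h3⟩; exact ⟨K, ⟨h1, h2⟩, h3⟩

theorem exists_max_above {F : Finset (Finset (Fin n))} {K : Finset (Fin n)} (hK : K ∈ F) :
    ∃ m ∈ F, K ⊆ m ∧ ∀ L ∈ F, ¬ m ⊂ L := by
  classical
  have hne : (F.filter fun L => K ⊆ L).Nonempty := ⟨K, Finset.mem_filter.2 ⟨hK, subset_rfl⟩⟩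
  obtain ⟨m, hm, hmax⟩ : ∃ m ∈ F.filter (fun L => K ⊆ L), ∀ x ∈ F.filter (fun L => K ⊆ L), ¬ m < x := by
    obtain ⟨m, hm1, hm2⟩ := Finset.exists_maximal hne
    exact ⟨m, hm1, fun x hx hlt => hlt.not_ge (hm2 hx hlt.le)⟩
  obtain ⟨hmF, hKm⟩ := Finset.mem_filter.1 hm
  refine ⟨m, hmF, hKm, fun L hL hcon => ?_⟩
  exact hmax L (Finset.mem_filter.2 ⟨hL, hKm.trans hcon.subset⟩) hcon

theorem scc_Usub {𝒮 : Finset (Finset (Fin n))} (h : Nested E 𝒮) {I : Finset (Fin n)}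
    (hI : I ∈ 𝒮) {x : Fin n} (hx : x ∈ Usub 𝒮 I) :
    scc E (Usub 𝒮 I) x ∈ 𝒮 ∧ scc E (Usub 𝒮 I) x ⊂ I := by
  classical
  obtain ⟨K, hK𝒮, hKI, hxK⟩ := mem_Usub.1 hx
  set F : Finset (Finset (Fin n)) := 𝒮.filter fun K => K ⊂ I with hF
  have hKF : K ∈ F := Finset.mem_filter.2 ⟨hK𝒮, hKI⟩
  obtain ⟨m, hmF, hKm, hmax⟩ := exists_max_above hKF
  set 𝒯 : Finset (Finset (Fin n)) := F.filter (fun L => ∀ L' ∈ F, ¬ L ⊂ L') with h𝒯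
  have h𝒯F : 𝒯 ⊆ F := Finset.filter_subset _ _
  have hF𝒮 : F ⊆ 𝒮 := Finset.filter_subset _ _
  have hm𝒯 : m ∈ 𝒯 := Finset.mem_filter.2 ⟨hmF, hmax⟩
  have hdisj : ∀ L ∈ 𝒯, ∀ L' ∈ 𝒯, L ≠ L' → Disjoint L L' := by
    intro L hL L' hL' hne
    obtain ⟨hLF, hLmax⟩ := Finset.mem_filter.1 hL
    obtain ⟨hL'F, hL'max⟩ := Finset.mem_filter.1 hL'
    rcases h.2.1 L (hF𝒮 hLF) L' (hF𝒮 hL'F) with h1 | h1 | h1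
    · exact absurd (lt_of_le_of_ne h1 hne) (hLmax L' hL'F)
    · exact absurd (lt_of_le_of_ne h1 hne.symm) (hL'max L hLF)
    · exact h1
  have hsup : 𝒯.sup id = Usub 𝒮 I := by
    apply subset_antisymm
    · intro y hy
      obtain ⟨L, hL, hyL⟩ := Finset.mem_sup.1 hy
      obtain ⟨hL𝒮, hLI⟩ := Finset.mem_filter.1 (h𝒯F hL)
      exact mem_Usub.2 ⟨L, hL𝒮, hLI, hyL⟩
    · intro y hy
      obtain ⟨K0, hK0, hK0I, hyK0⟩ := mem_Usub.1 hy
      obtain ⟨m0, hm0F, hK0m0, hm0max⟩ := exists_max_above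
        (Finset.mem_filter.2 ⟨hK0, hK0I⟩ : K0 ∈ F)
      exact Finset.mem_sup.2 ⟨m0, Finset.mem_filter.2 ⟨hm0F, hm0max⟩, hK0m0 hyK0⟩
  have := h.2.2 𝒯 (h𝒯F.trans hF𝒮) hdisj m hm𝒯 x (hKm hxK)
  rw [hsup] at this
  rw [this]
  exact ⟨hF𝒮 hmF, (Finset.mem_filter.1 hmF).2⟩

theorem Usub_ssubset {𝒮 : Finset (Finset (Fin n))} (h : Nested E 𝒮) {I : Finset (Fin n)}
    (hI : I ∈ 𝒮) : Usub 𝒮 I ⊂ I := by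
  have hsub : Usub 𝒮 I ⊆ I := by
    intro y hy
    obtain ⟨K, _, hKI, hyK⟩ := mem_Usub.1 hy
    exact hKI.subset hyK
  rcases lt_or_eq_of_le hsub with h1 | h1
  · exact h1
  · exfalso
    obtain ⟨x, hx⟩ := (h.1 I hI).1
    have hx' : x ∈ Usub 𝒮 I := h1.symm ▸ hx
    have h2 := (scc_Usub h hI hx').2
    rw [h1, scc_self_eq (h.1 I hI) hx] at h2
    exact h2.ne rfl

theorem not_mem_Usub_iff {𝒮 : Finset (Finset (Fin n))} (h : Nested E 𝒮) {I : Finset (Fin n)}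
    (hI : I ∈ 𝒮) {x : Fin n} (hx : x ∈ I) :
    x ∉ Usub 𝒮 I ↔ minMem 𝒮 x = I := by
  have hxS : x ∈ nsupport 𝒮 := subset_nsupport hI hx
  obtain ⟨hmem, hxmem, hmin⟩ := minMem_spec h hxS
  constructor
  · intro hnot
    have h1 : minMem 𝒮 x ⊆ I := hmin I hI hx
    rcases lt_or_eq_of_le h1 with h2 | h2
    · exact absurd (mem_Usub.2 ⟨minMem 𝒮 x, hmem, h2, hxmem⟩) hnot
    · exact h2
  · intro heq hmem'
    obtain ⟨K, hK𝒮, hKI, hxK⟩ := mem_Usub.1 hmem'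
    have := hmin K hK𝒮 hxK
    rw [heq] at this
    exact hKI.2 this

theorem card_le_card_nsupport {𝒮 : Finset (Finset (Fin n))} (h : Nested E 𝒮) :
    𝒮.card ≤ (nsupport 𝒮).card := by
  classical
  rcases 𝒮.eq_empty_or_nonempty with rfl | ⟨I0, hI0⟩
  · simp
  obtain ⟨e0, he0⟩ := (h.1 I0 hI0).1
  have hroot : ∀ I ∈ 𝒮, (I \ Usub 𝒮 I).Nonempty := by
    intro I hI
    rw [Finset.sdiff_nonempty]
    exact fun hcon => (Usub_ssubset h hI).not_subset hcon
  set f : Finset (Fin n) → Fin n :=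
    fun I => if hne : (I \ Usub 𝒮 I).Nonempty then (I \ Usub 𝒮 I).min' hne else e0 with hf
  have hfmem : ∀ I ∈ 𝒮, f I ∈ I \ Usub 𝒮 I := by
    intro I hI
    have h1 : f I = (I \ Usub 𝒮 I).min' (hroot I hI) := dif_pos (hroot I hI)
    rw [h1]
    exact Finset.min'_mem _ _
  apply Finset.card_le_card_of_injOn f
  · intro I hI
    exact subset_nsupport hI (Finset.mem_sdiff.1 (hfmem I hI)).1
  · intro I hI J hJ hfeq
    obtain ⟨hI1, hI2⟩ := Finset.mem_sdiff.1 (hfmem I hI)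
    obtain ⟨hJ1, hJ2⟩ := Finset.mem_sdiff.1 (hfmem J hJ)
    rw [hfeq] at hI1 hI2
    by_contra hne
    rcases h.2.1 I hI J hJ with h1 | h1 | h1
    · exact hJ2 (mem_Usub.2 ⟨I, hI, lt_of_le_of_ne h1 hne, hfeq ▸ (Finset.mem_sdiff.1 (hfmem I hI)).1⟩)
    · exact hI2 (mem_Usub.2 ⟨J, hJ, lt_of_le_of_ne h1 (Ne.symm hne), hJ1⟩)
    · exact (Finset.disjoint_left.1 h1 (hfeq ▸ (Finset.mem_sdiff.1 (hfmem I hI)).1)) hJ1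
theorem key {𝒮 : Finset (Finset (Fin n))} (h : Nested E 𝒮) {B : Finset (Fin n)} (hB : B ∈ 𝒮)
    {s x : Fin n} (hroot : ∀ K ∈ 𝒮, K ⊆ B → K ≠ B → s ∉ K) (hx : x ∈ B.erase s) :
    Nested E (insert (scc E (B.erase s) x) 𝒮) := by
  classical
  set X := scc E (B.erase s) x with hXdef
  by_cases hX𝒮 : X ∈ 𝒮
  · rwa [Finset.insert_eq_self.2 hX𝒮]
  have hXsc : StronglyConnected E X := scc_stronglyConnected hx
  have hXsub : X ⊆ B.erase s := scc_subset
  have hXB : X ⊆ B := hXsub.trans (Finset.erase_subset _ _)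
  have hXne : X.Nonempty := ⟨x, self_mem_scc hx⟩
  -- a strongly connected subset of B.erase s meeting X is contained in X
  have habsorb : ∀ I : Finset (Fin n), StronglyConnected E I → I ⊆ B.erase s →
      ∀ z, z ∈ I → z ∈ X → I ⊆ X := by
    intro I hIsc hIsub z hzI hzX
    have h1 : I ⊆ scc E (B.erase s) z := sc_subset_scc hIsc hIsub hzI
    rwa [scc_eq_of_mem hzX] at h1
  -- comparison of X with members of 𝒮
  have hcomp : ∀ I ∈ 𝒮, I ⊆ X ∨ X ⊆ I ∨ Disjoint X I := by
    intro I hI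
    rcases h.2.1 I hI B hB with h1 | h1 | h1
    · rcases eq_or_ne I B with rfl | hne
      · exact Or.inr (Or.inl hXB)
      · have hsI : s ∉ I := hroot I hI h1 hne
        have hIsub : I ⊆ B.erase s := Finset.subset_erase.2 ⟨h1, hsI⟩
        by_cases hd : Disjoint X I
        · exact Or.inr (Or.inr hd)
        · obtain ⟨z, hz1, hz2⟩ := Finset.not_disjoint_iff.1 hd
          exact Or.inl (habsorb I (h.1 I hI) hIsub z hz2 hz1)
    · exact Or.inr (Or.inl (hXB.trans h1))
    · exact Or.inr (Or.inr (Disjoint.mono_left hXB h1.symm))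
  refine ⟨?_, ?_, ?_⟩
  · intro I hI
    rcases Finset.mem_insert.1 hI with rfl | hI'
    · exact hXsc
    · exact h.1 I hI'
  · intro I hI J hJ
    rcases Finset.mem_insert.1 hI with rfl | hI' <;> rcases Finset.mem_insert.1 hJ with rfl | hJ'
    · exact Or.inl subset_rfl
    · rcases hcomp J hJ' with h1 | h1 | h1
      · exact Or.inr (Or.inl h1)
      · exact Or.inl h1
      · exact Or.inr (Or.inr h1)
    · rcases hcomp I hI' with h1 | h1 | h1
      · exact Or.inl h1
      · exact Or.inr (Or.inl h1)
      · exact Or.inr (Or.inr h1.symm)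
    · exact h.2.1 I hI' J hJ'
  -- the hard condition (iii)
  intro 𝒯 h𝒯 hdisj I hI z hzI
  by_cases hXT : X ∈ 𝒯
  swap
  · -- 𝒯 ⊆ 𝒮
    have h𝒯𝒮 : 𝒯 ⊆ 𝒮 := by
      intro J hJ
      rcases Finset.mem_insert.1 (h𝒯 hJ) with rfl | hJ'
      · exact absurd hJ hXT
      · exact hJ'
    exact h.2.2 𝒯 h𝒯𝒮 hdisj I hI z hzI
  -- main case : X ∈ 𝒯
  set 𝒯' := 𝒯.erase X with h𝒯'def
  have h𝒯'𝒮 : 𝒯' ⊆ 𝒮 := by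
    intro J hJ
    obtain ⟨hne, hJ𝒯⟩ := Finset.mem_erase.1 hJ
    rcases Finset.mem_insert.1 (h𝒯 hJ𝒯) with rfl | hJ'
    · exact absurd rfl hne
    · exact hJ'
  have hdisj' : ∀ L ∈ 𝒯', ∀ L' ∈ 𝒯', L ≠ L' → Disjoint L L' := by
    intro L hL L' hL' hne
    exact hdisj L (Finset.mem_erase.1 hL).2 L' (Finset.mem_erase.1 hL').2 hne
  have hXd : ∀ J ∈ 𝒯', Disjoint X J := by
    intro J hJ
    exact hdisj X hXT J (Finset.mem_erase.1 hJ).2 (Ne.symm (Finset.mem_erase.1 hJ).1)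
  set W := 𝒯'.sup id with hWdef
  set V := 𝒯.sup id with hVdef
  have hV : V = X ∪ W := by
    have h𝒯eq : 𝒯 = insert X 𝒯' := (Finset.insert_erase hXT).symm
    rw [hVdef, h𝒯eq, Finset.sup_insert]
    rfl
  have hXW : Disjoint X W := by
    rw [hWdef, Finset.disjoint_sup_right]
    exact fun J hJ => hXd J hJ
  have hmemW : ∀ {v : Fin n}, v ∈ W → ∃ J ∈ 𝒯', v ∈ J := fun hv => by
    obtain ⟨J, hJ, hvJ⟩ := Finset.mem_sup.1 hv; exact ⟨J, hJ, hvJ⟩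
  -- each member of 𝒯' is inside B.erase s or disjoint from B
  have hmemcase : ∀ J ∈ 𝒯', J ⊆ B.erase s ∨ Disjoint J B := by
    intro J hJ
    have hJ𝒮 := h𝒯'𝒮 hJ
    rcases h.2.1 J hJ𝒮 B hB with h1 | h1 | h1
    · left
      rcases eq_or_ne J B with rfl | hne
      · exfalso
        obtain ⟨y, hy⟩ := hXne
        exact (Finset.disjoint_left.1 (hXd J hJ)) hy (h1.antisymm' h1 ▸ hXB hy)
      · exact Finset.subset_erase.2 ⟨h1, hroot J hJ𝒮 h1 hne⟩
    · exfalso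
      obtain ⟨y, hy⟩ := hXne
      exact (Finset.disjoint_left.1 (hXd J hJ)) hy (h1 (hXB hy))
    · exact Or.inr h1
  set F1 := 𝒯'.filter (fun J => Disjoint J B) with hF1def
  set V1 := B ∪ F1.sup id with hV1def
  have hVV1 : V ⊆ V1 := by
    rw [hV]
    intro v hv
    rcases Finset.mem_union.1 hv with hv | hv
    · exact Finset.mem_union_left _ (hXB hv)
    · obtain ⟨J, hJ, hvJ⟩ := hmemW hv
      rcases hmemcase J hJ with h1 | h1
      · exact Finset.mem_union_left _ ((h1.trans (Finset.erase_subset _ _)) hvJ)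
      · exact Finset.mem_union_right _ (Finset.mem_sup.2 ⟨J, Finset.mem_filter.2 ⟨hJ, h1⟩, hvJ⟩)
  have hVB : ∀ {v : Fin n}, v ∈ V → v ∈ B → v ∈ B.erase s := by
    intro v hv hvB
    rw [hV] at hv
    rcases Finset.mem_union.1 hv with hv | hv
    · exact hXsub hv
    · obtain ⟨J, hJ, hvJ⟩ := hmemW hv
      rcases hmemcase J hJ with h1 | h1
      · exact h1 hvJ
      · exact absurd hvB (Finset.disjoint_left.1 h1 hvJ)
  -- R1 : mutual reachability in V1 starting in B stays in B
  have R1 : ∀ a b : Fin n, a ∈ B → ReachIn E V1 a b → ReachIn E V1 b a → b ∈ B := by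
    intro a b ha hab hba
    have h𝒯'' : (insert B F1 : Finset (Finset (Fin n))) ⊆ 𝒮 := by
      intro J hJ
      rcases Finset.mem_insert.1 hJ with rfl | hJ'
      · exact hB
      · exact h𝒯'𝒮 (Finset.mem_filter.1 hJ').1
    have hdisj'' : ∀ L ∈ insert B F1, ∀ L' ∈ insert B F1, L ≠ L' → Disjoint L L' := by
      intro L hL L' hL' hne
      rcases Finset.mem_insert.1 hL with rfl | hL1 <;> rcases Finset.mem_insert.1 hL' with rfl | hL2
      · exact absurd rfl hne
      · exact ((Finset.mem_filter.1 hL2).2).symm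
      · exact (Finset.mem_filter.1 hL1).2
      · exact hdisj' L (Finset.mem_filter.1 hL1).1 L' (Finset.mem_filter.1 hL2).1 hne
    have hsup'' : (insert B F1).sup id = V1 := by
      rw [Finset.sup_insert, hV1def]; rfl
    have hscc := h.2.2 (insert B F1) h𝒯'' hdisj'' B (Finset.mem_insert_self _ _) a ha
    rw [hsup''] at hscc
    have hbV1 : b ∈ V1 := reachIn_mem hab (Finset.mem_union_left _ ha)
    have : b ∈ scc E V1 a := mem_scc.2 ⟨hbV1, hab, hba⟩
    rw [hscc] at this
    exact this
  -- R2 : mutual reachability in V starting in B stays in B.erase s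
  have R2 : ∀ a b : Fin n, ReachIn E V a b → ReachIn E V b a → a ∈ B →
      b ∈ B ∧ ReachIn E (B.erase s) a b := by
    intro a b hab
    induction hab using Relation.ReflTransGen.head_induction_on with
    | refl => exact fun _ ha => ⟨ha, .refl⟩
    | head hac hcb ih =>
      intro hba ha
      have hacR := Relation.ReflTransGen.single (r := fun x y => E x y ∧ x ∈ V ∧ y ∈ V) hac
      have hcB := R1 _ _ ha (reachIn_mono hVV1 hacR) (reachIn_mono hVV1 (hcb.trans hba))
      obtain ⟨hbB, hcb'⟩ := ih (hba.trans hacR) hcB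
      exact ⟨hbB, Relation.ReflTransGen.head ⟨hac.1, hVB hac.2.1 ha, hVB hac.2.2 hcB⟩ hcb'⟩
  -- C1 : mutual reachability in V from X stays in X
  have C1 : ∀ a b : Fin n, a ∈ X → ReachIn E V a b → ReachIn E V b a → b ∈ X := by
    intro a b haX hab hba
    have haB : a ∈ B := hXB haX
    obtain ⟨hbB, h1⟩ := R2 a b hab hba haB
    obtain ⟨-, h2⟩ := R2 b a hba hab hbB
    obtain ⟨-, hxa, hax⟩ := mem_scc.1 haX
    exact mem_scc.2 ⟨reachIn_mem h1 (hXsub haX), hxa.trans h1, h2.trans hax⟩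
  -- R3 : mutual reachability in V from W stays in W
  have R3 : ∀ a b : Fin n, ReachIn E V a b → ReachIn E V b a → a ∈ W →
      b ∈ W ∧ ReachIn E W a b := by
    intro a b hab
    induction hab using Relation.ReflTransGen.head_induction_on with
    | refl => exact fun _ ha => ⟨ha, .refl⟩
    | head hac hcb ih =>
      intro hba ha
      have hacR := Relation.ReflTransGen.single (r := fun x y => E x y ∧ x ∈ V ∧ y ∈ V) hac
      obtain ⟨hE1, haV, hcV⟩ := hac
      rcases Finset.mem_union.1 (hV ▸ hcV) with hcX | hcW
      · exact absurd (C1 _ _ hcX (hcb.trans hba) hacR)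
          (fun hXa => (Finset.disjoint_left.1 hXW) hXa ha)
      · obtain ⟨hbW, hcb'⟩ := ih (hba.trans hacR) hcW
        exact ⟨hbW, Relation.ReflTransGen.head ⟨hE1, ha, hcW⟩ hcb'⟩
  -- C2 : mutual reachability in V from a member of 𝒯' stays in that member
  have C2 : ∀ (J : Finset (Fin n)), J ∈ 𝒯' → ∀ a b : Fin n, a ∈ J →
      ReachIn E V a b → ReachIn E V b a → b ∈ J := by
    intro J hJ a b haJ hab hba
    have haW : a ∈ W := Finset.mem_sup.2 ⟨J, hJ, haJ⟩
    obtain ⟨hbW, h1⟩ := R3 a b hab hba haW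
    obtain ⟨-, h2⟩ := R3 b a hba hab hbW
    have hscc := h.2.2 𝒯' h𝒯'𝒮 hdisj' J hJ a haJ
    have : b ∈ scc E W a := mem_scc.2 ⟨hbW, h1, h2⟩
    rwa [hscc] at this
  -- conclusion
  rcases eq_or_ne I X with rfl | hIX
  · apply subset_antisymm
    · intro w hw
      obtain ⟨hwV, h1, h2⟩ := mem_scc.1 hw
      exact C1 z w hzI h1 h2
    · intro w hw
      have hzV : z ∈ V := hV ▸ Finset.mem_union_left _ hzI
      have hwV : w ∈ V := hV ▸ Finset.mem_union_left _ hw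
      have hXV : X ⊆ V := hV ▸ Finset.subset_union_left
      exact mem_scc.2 ⟨hwV, reachIn_mono hXV (hXsc.2 z hzI w hw),
        reachIn_mono hXV (hXsc.2 w hw z hzI)⟩
  · have hI' : I ∈ 𝒯' := Finset.mem_erase.2 ⟨hIX, hI⟩
    have hIsc : StronglyConnected E I := h.1 I (h𝒯'𝒮 hI')
    apply subset_antisymm
    · intro w hw
      obtain ⟨hwV, h1, h2⟩ := mem_scc.1 hw
      exact C2 I hI' z w hzI h1 h2
    · intro w hw
      have hIV : I ⊆ V := by
        intro v hv
        exact hV ▸ Finset.mem_union_right _ (Finset.mem_sup.2 ⟨I, hI', hv⟩)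
      exact mem_scc.2 ⟨hIV hw, reachIn_mono hIV (hIsc.2 z hzI w hw),
        reachIn_mono hIV (hIsc.2 w hw z hzI)⟩
theorem card_eq_card_nsupport {𝒮 : Finset (Finset (Fin n))} (h : MaximalNested E 𝒮) :
    𝒮.card = (nsupport 𝒮).card := by
  classical
  refine le_antisymm (card_le_card_nsupport h.1) ?_
  by_contra hlt
  push_neg at hlt
  have hfib : (nsupport 𝒮).card = ∑ I ∈ 𝒮, ((nsupport 𝒮).filter fun r => minMem 𝒮 r = I).card :=
    Finset.card_eq_sum_card_fiberwise fun r hr => (minMem_spec h.1 hr).1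
  have hbig : ∃ I ∈ 𝒮, 1 < ((nsupport 𝒮).filter fun r => minMem 𝒮 r = I).card := by
    by_contra hcon
    push_neg at hcon
    have : (nsupport 𝒮).card ≤ ∑ _I ∈ 𝒮, 1 := by
      rw [hfib]
      exact Finset.sum_le_sum hcon
    simp only [Finset.sum_const, smul_eq_mul, mul_one] at this
    exact absurd (lt_of_lt_of_le hlt this) (lt_irrefl _)
  obtain ⟨I, hI, hcard⟩ := hbig
  obtain ⟨x, hxf, y, hyf, hxy⟩ := Finset.one_lt_card.1 hcard
  obtain ⟨hxS, hxmin⟩ := Finset.mem_filter.1 hxf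
  obtain ⟨hyS, hymin⟩ := Finset.mem_filter.1 hyf
  have hxI : x ∈ I := hxmin ▸ (minMem_spec h.1 hxS).2.1
  have hyI : y ∈ I := hymin ▸ (minMem_spec h.1 hyS).2.1
  have hynot : y ∉ Usub 𝒮 I := (not_mem_Usub_iff h.1 hI hyI).2 hymin
  have hroot : ∀ K ∈ 𝒮, K ⊆ I → K ≠ I → y ∉ K := by
    intro K hK hKI hne hyK
    exact hynot (mem_Usub.2 ⟨K, hK, lt_of_le_of_ne hKI hne, hyK⟩)
  have hxe : x ∈ I.erase y := Finset.mem_erase.2 ⟨hxy, hxI⟩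
  have hnested := key h.1 hI hroot hxe
  set X := scc E (I.erase y) x with hXdef
  have hXsub : X ⊆ I := scc_subset.trans (Finset.erase_subset _ _)
  have hsupp : nsupport (insert X 𝒮) = nsupport 𝒮 := by
    apply subset_antisymm
    · intro v hv
      obtain ⟨J, hJ, hvJ⟩ := mem_nsupport.1 hv
      rcases Finset.mem_insert.1 hJ with rfl | hJ'
      · exact subset_nsupport hI (hXsub hvJ)
      · exact mem_nsupport.2 ⟨J, hJ', hvJ⟩
    · intro v hv
      obtain ⟨J, hJ, hvJ⟩ := mem_nsupport.1 hv
      exact mem_nsupport.2 ⟨J, Finset.mem_insert_of_mem hJ, hvJ⟩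
  have heq := h.2 (insert X 𝒮) hnested hsupp (Finset.subset_insert _ _)
  have hX𝒮 : X ∈ 𝒮 := heq ▸ Finset.mem_insert_self X 𝒮
  have hxX : x ∈ X := self_mem_scc hxe
  have hIX : I ⊆ X := hxmin ▸ (minMem_spec h.1 hxS).2.2 X hX𝒮 hxX
  exact (Finset.mem_erase.1 (scc_subset (hIX hyI))).1 rfl

theorem minMem_inj {𝒮 : Finset (Finset (Fin n))} (h : MaximalNested E 𝒮) {x y : Fin n}
    (hx : x ∈ nsupport 𝒮) (hy : y ∈ nsupport 𝒮) (hxy : minMem 𝒮 x = minMem 𝒮 y) : x = y := by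
  classical
  have hfib : (nsupport 𝒮).card = ∑ I ∈ 𝒮, ((nsupport 𝒮).filter fun r => minMem 𝒮 r = I).card :=
    Finset.card_eq_sum_card_fiberwise fun r hr => (minMem_spec h.1 hr).1
  have hone : ∀ I ∈ 𝒮, 1 ≤ ((nsupport 𝒮).filter fun r => minMem 𝒮 r = I).card := by
    intro I hI
    obtain ⟨r, hr⟩ := Finset.sdiff_nonempty.2 (Usub_ssubset h.1 hI).not_subset
    obtain ⟨hrI, hrU⟩ := Finset.mem_sdiff.1 hr
    have hrS : r ∈ nsupport 𝒮 := subset_nsupport hI hrI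
    refine Finset.card_pos.2 ⟨r, Finset.mem_filter.2 ⟨hrS, (not_mem_Usub_iff h.1 hI hrI).1 hrU⟩⟩
  have hsum : ∑ I ∈ 𝒮, ((nsupport 𝒮).filter fun r => minMem 𝒮 r = I).card = ∑ _I ∈ 𝒮, 1 := by
    rw [← hfib, ← card_eq_card_nsupport h]
    simp
  have hall : ∀ I ∈ 𝒮, ((nsupport 𝒮).filter fun r => minMem 𝒮 r = I).card = 1 := by
    by_contra hcon
    push_neg at hcon
    obtain ⟨I, hI, hne⟩ := hcon
    have h2 : 2 ≤ ((nsupport 𝒮).filter fun r => minMem 𝒮 r = I).card :=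
      lt_of_le_of_ne (hone I hI) (Ne.symm hne)
    have : ∑ _I ∈ 𝒮, 1 < ∑ I ∈ 𝒮, ((nsupport 𝒮).filter fun r => minMem 𝒮 r = I).card :=
      Finset.sum_lt_sum hone ⟨I, hI, h2⟩
    exact absurd (hsum ▸ this) (lt_irrefl _)
  have hImem : minMem 𝒮 x ∈ 𝒮 := (minMem_spec h.1 hx).1
  have hcard := hall _ hImem
  have hxmem : x ∈ (nsupport 𝒮).filter fun r => minMem 𝒮 r = minMem 𝒮 x :=
    Finset.mem_filter.2 ⟨hx, rfl⟩
  have hymem : y ∈ (nsupport 𝒮).filter fun r => minMem 𝒮 r = minMem 𝒮 x :=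
    Finset.mem_filter.2 ⟨hy, hxy.symm⟩
  exact Finset.card_le_one.1 hcard.le x hxmem y hymem

theorem Usub_minMem {𝒮 : Finset (Finset (Fin n))} (h : MaximalNested E 𝒮) {x : Fin n}
    (hx : x ∈ nsupport 𝒮) : Usub 𝒮 (minMem 𝒮 x) = (minMem 𝒮 x).erase x := by
  obtain ⟨hImem, hxI, hmin⟩ := minMem_spec h.1 hx
  apply subset_antisymm
  · intro v hv
    have hvI : v ∈ minMem 𝒮 x := (Usub_ssubset h.1 hImem).subset hv
    refine Finset.mem_erase.2 ⟨?_, hvI⟩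
    rintro rfl
    exact ((not_mem_Usub_iff h.1 hImem hxI).2 rfl) hv
  · intro v hv
    obtain ⟨hvx, hvI⟩ := Finset.mem_erase.1 hv
    by_contra hvU
    have hvS : v ∈ nsupport 𝒮 := subset_nsupport hImem hvI
    have := (not_mem_Usub_iff h.1 hImem hvI).1 hvU
    exact hvx (minMem_inj h hvS hx (this.trans rfl))
end NestedProof

open NestedProof

/-- Internal mutation: let `s` be a non-maximal element of the support of a maximal nested
collection `𝒮` and let `j = s⁺` (so `S_j` is the smallest member strictly containing `S_s`).
Then `μ_s(𝒮)`, obtained from `𝒮` by removing `S_s` and adding `(S_{s⁺} − {s}) ⊕ s⁺`, is a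
maximal nested collection with the same support, and it is the unique maximal nested
collection with that support, other than `𝒮`, containing all members `S_r` with `r ≠ s`. -/
theorem stmt4 (n : ℕ) (E : Fin n → Fin n → Prop) (hE : ∀ i, ¬ E i i)
    (𝒮 : Finset (Finset (Fin n))) (h𝒮 : MaximalNested E 𝒮)
    (s j : Fin n) (hs : s ∈ nsupport 𝒮) (hj : j ∈ nsupport 𝒮)
    (hlt : minMem 𝒮 s ⊂ minMem 𝒮 j)
    (hcov : ∀ J ∈ 𝒮, minMem 𝒮 s ⊂ J → minMem 𝒮 j ⊆ J) :
    MaximalNested E (insert (oplus E ((minMem 𝒮 j).erase s) j) (𝒮.erase (minMem 𝒮 s))) ∧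
    nsupport (insert (oplus E ((minMem 𝒮 j).erase s) j) (𝒮.erase (minMem 𝒮 s)))
      = nsupport 𝒮 ∧
    insert (oplus E ((minMem 𝒮 j).erase s) j) (𝒮.erase (minMem 𝒮 s)) ≠ 𝒮 ∧
    (∀ 𝒯 : Finset (Finset (Fin n)), MaximalNested E 𝒯 → nsupport 𝒯 = nsupport 𝒮 →
      𝒯 ≠ 𝒮 → (∀ r ∈ nsupport 𝒮, r ≠ s → minMem 𝒮 r ∈ 𝒯) →
      𝒯 = insert (oplus E ((minMem 𝒮 j).erase s) j) (𝒮.erase (minMem 𝒮 s))) := by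
  classical
  obtain ⟨hN, hMax⟩ := h𝒮
  set A := minMem 𝒮 s with hA
  set B := minMem 𝒮 j with hB
  obtain ⟨hA𝒮, hsA, hAmin⟩ := minMem_spec hN hs
  obtain ⟨hB𝒮, hjB, hBmin⟩ := minMem_spec hN hj
  have hsB : s ∈ B := hlt.1 hsA
  have hjA : j ∉ A := fun hjA => hlt.2 (hBmin A hA𝒮 hjA)
  have hjs : j ≠ s := fun e => hjA (e ▸ hsA)
  have hjBe : j ∈ B.erase s := Finset.mem_erase.2 ⟨hjs, hjB⟩
  have hopl : oplus E (B.erase s) j = scc E (B.erase s) j := by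
    rw [oplus, Finset.insert_eq_self.2 hjBe]
  rw [hopl]
  set N := scc E (B.erase s) j with hNdef
  set 𝒮₀ := 𝒮.erase A with h𝒮₀
  have hN₀ : Nested E 𝒮₀ := nested_subset hN (Finset.erase_subset _ _)
  have hBA : B ≠ A := fun e => hlt.2 (e ▸ subset_rfl)
  have hB₀ : B ∈ 𝒮₀ := Finset.mem_erase.2 ⟨hBA, hB𝒮⟩
  have hroot₀ : ∀ K ∈ 𝒮₀, K ⊆ B → K ≠ B → s ∉ K := by
    intro K hK hKB hKne hsK
    obtain ⟨hKA, hK𝒮⟩ := Finset.mem_erase.1 hK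
    have hAK : A ⊆ K := hAmin K hK𝒮 hsK
    have hBK : B ⊆ K := hcov K hK𝒮 (lt_of_le_of_ne hAK (Ne.symm hKA))
    exact hKne (subset_antisymm hKB hBK)
  have hkey : Nested E (insert N 𝒮₀) := key hN₀ hB₀ hroot₀ hjBe
  have hNB : N ⊆ B.erase s := scc_subset
  have hsN : s ∉ N := fun hsN' => (Finset.mem_erase.1 (hNB hsN')).1 rfl
  have hjN : j ∈ N := self_mem_scc hjBe
  have hN𝒮 : N ∉ 𝒮 := fun hmem => hsN (hBmin N hmem hjN hsB)
  have hN₀' : N ∉ 𝒮₀ := fun hmem => hN𝒮 ((Finset.erase_subset _ _) hmem)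
  have hsupp₀ : nsupport 𝒮₀ = nsupport 𝒮 := by
    apply subset_antisymm
    · intro v hv
      obtain ⟨J, hJ, hvJ⟩ := mem_nsupport.1 hv
      exact mem_nsupport.2 ⟨J, (Finset.erase_subset _ _) hJ, hvJ⟩
    · intro v hv
      obtain ⟨J, hJ, hvJ⟩ := mem_nsupport.1 hv
      rcases eq_or_ne J A with rfl | hne
      · exact mem_nsupport.2 ⟨B, hB₀, hlt.1 hvJ⟩
      · exact mem_nsupport.2 ⟨J, Finset.mem_erase.2 ⟨hne, hJ⟩, hvJ⟩
  have hsuppμ : nsupport (insert N 𝒮₀) = nsupport 𝒮 := by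
    apply subset_antisymm
    · intro v hv
      obtain ⟨J, hJ, hvJ⟩ := mem_nsupport.1 hv
      rcases Finset.mem_insert.1 hJ with rfl | hJ'
      · exact subset_nsupport hB𝒮 ((Finset.erase_subset _ _) (hNB hvJ))
      · exact hsupp₀ ▸ mem_nsupport.2 ⟨J, hJ', hvJ⟩
    · intro v hv
      rw [← hsupp₀] at hv
      obtain ⟨J, hJ, hvJ⟩ := mem_nsupport.1 hv
      exact mem_nsupport.2 ⟨J, Finset.mem_insert_of_mem hJ, hvJ⟩
  have hcard𝒮 : 𝒮.card = (nsupport 𝒮).card := card_eq_card_nsupport ⟨hN, hMax⟩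
  have hcardμ : (insert N 𝒮₀).card = 𝒮.card := by
    rw [Finset.card_insert_of_notMem hN₀', h𝒮₀, Finset.card_erase_add_one hA𝒮]
  have hmaxμ : MaximalNested E (insert N 𝒮₀) := by
    refine ⟨hkey, fun 𝒮' hn' hsupp' hsub' => ?_⟩
    refine (Finset.eq_of_subset_of_card_le hsub' ?_).symm
    calc 𝒮'.card ≤ (nsupport 𝒮').card := card_le_card_nsupport hn'
    _ = (nsupport 𝒮).card := by rw [hsupp', hsuppμ]
    _ = 𝒮.card := hcard𝒮.symm
    _ = (insert N 𝒮₀).card := hcardμ.symm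
  have hneμ : insert N 𝒮₀ ≠ 𝒮 := by
    intro heq
    have hAμ : A ∈ insert N 𝒮₀ := heq.symm ▸ hA𝒮
    rcases Finset.mem_insert.1 hAμ with hAN | hA₀
    · exact hsN (hAN ▸ hsA)
    · exact (Finset.mem_erase.1 hA₀).1 rfl
  refine ⟨hmaxμ, hsuppμ, hneμ, ?_⟩
  -- uniqueness
  intro 𝒯 h𝒯 h𝒯supp h𝒯ne h𝒯r
  have hN𝒯 : Nested E 𝒯 := h𝒯.1
  have h𝒮₀𝒯 : 𝒮₀ ⊆ 𝒯 := by
    intro I hI0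
    obtain ⟨hIA, hI𝒮⟩ := Finset.mem_erase.1 hI0
    obtain ⟨r, hr⟩ := Finset.sdiff_nonempty.2 (Usub_ssubset hN hI𝒮).not_subset
    obtain ⟨hrI, hrU⟩ := Finset.mem_sdiff.1 hr
    have hminr : minMem 𝒮 r = I := (not_mem_Usub_iff hN hI𝒮 hrI).1 hrU
    have hrS : r ∈ nsupport 𝒮 := subset_nsupport hI𝒮 hrI
    have hrs : r ≠ s := by
      rintro rfl
      exact hIA (hA ▸ hminr.symm)
    exact hminr ▸ h𝒯r r hrS hrs
  have hB𝒯 : B ∈ 𝒯 := h𝒮₀𝒯 hB₀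
  have h𝒯card : 𝒯.card = (nsupport 𝒮).card := by
    rw [card_eq_card_nsupport h𝒯, h𝒯supp]
  have hs𝒯 : s ∈ nsupport 𝒯 := h𝒯supp.symm ▸ hs
  have hj𝒯 : j ∈ nsupport 𝒯 := h𝒯supp.symm ▸ hj
  obtain ⟨hM𝒯, hsM, hMmin⟩ := minMem_spec hN𝒯 hs𝒯
  have hMB : minMem 𝒯 s ⊆ B := hMmin B hB𝒯 hsB
  rcases eq_or_ne (minMem 𝒯 s) B with hMeq | hMne
  · -- main case : 𝒯 = μ
    have hUB𝒯 : Usub 𝒯 B = B.erase s := by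
      have h1 := Usub_minMem h𝒯 hs𝒯
      rw [hMeq] at h1
      exact h1
    have hjU : j ∈ Usub 𝒯 B := hUB𝒯.symm ▸ hjBe
    have hNmem := (scc_Usub hN𝒯 hB𝒯 hjU).1
    rw [hUB𝒯] at hNmem
    have hμ𝒯 : insert N 𝒮₀ ⊆ 𝒯 := Finset.insert_subset hNmem h𝒮₀𝒯
    refine (Finset.eq_of_subset_of_card_le hμ𝒯 ?_).symm
    rw [h𝒯card, hcardμ, hcard𝒮]
  · exfalso
    have hMlt : minMem 𝒯 s ⊂ B := lt_of_le_of_ne hMB hMne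
    obtain ⟨r, hr⟩ := Finset.sdiff_nonempty.2 (Usub_ssubset hN𝒯 hB𝒯).not_subset
    obtain ⟨hrB, hrU⟩ := Finset.mem_sdiff.1 hr
    have hminr𝒯 : minMem 𝒯 r = B := (not_mem_Usub_iff hN𝒯 hB𝒯 hrB).1 hrU
    have hrs : r ≠ s := by
      rintro rfl
      exact hMne hminr𝒯
    have hUB𝒮 : Usub 𝒮 B = B.erase j := by
      have h1 := Usub_minMem ⟨hN, hMax⟩ hj
      rw [← hB] at h1
      exact h1
    rcases eq_or_ne r j with rfl | hrj
    · -- r = j : B has root j in 𝒯, derive 𝒯 = 𝒮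
      have hUB𝒯 : Usub 𝒯 B = B.erase r := by
        have h1 := Usub_minMem h𝒯 hj𝒯
        rw [hminr𝒯] at h1
        exact h1
      have hsBe : s ∈ B.erase r := Finset.mem_erase.2 ⟨hjs.symm, hsB⟩
      have hY𝒮 := scc_Usub hN hB𝒮 (x := s) (hUB𝒮.symm ▸ hsBe)
      rw [hUB𝒮] at hY𝒮
      have hY𝒯 := (scc_Usub hN𝒯 hB𝒯 (x := s) (hUB𝒯.symm ▸ hsBe)).1
      rw [hUB𝒯] at hY𝒯
      have hsY : s ∈ scc E (B.erase r) s := self_mem_scc hsBe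
      have hAY : A ⊆ scc E (B.erase r) s := hAmin _ hY𝒮.1 hsY
      have hAeq : A = scc E (B.erase r) s := by
        rcases eq_or_ne A (scc E (B.erase r) s) with h1 | h1
        · exact h1
        · exact absurd (hcov _ hY𝒮.1 (lt_of_le_of_ne hAY h1)) hY𝒮.2.2
      have h𝒮𝒯 : 𝒮 ⊆ 𝒯 := by
        intro I hI
        rcases eq_or_ne I A with rfl | hne
        · exact hAeq ▸ hY𝒯
        · exact h𝒮₀𝒯 (Finset.mem_erase.2 ⟨hne, hI⟩)
      refine h𝒯ne ?_
      refine Finset.eq_of_subset_of_card_le h𝒮𝒯 ?_ |>.symm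
      rw [h𝒯card, hcard𝒮]
    · -- r ≠ j : contradiction
      have hrBe : r ∈ B.erase j := Finset.mem_erase.2 ⟨hrj, hrB⟩
      have hrUB𝒮 : r ∈ Usub 𝒮 B := hUB𝒮.symm ▸ hrBe
      obtain ⟨K, hK𝒮, hKB, hrK⟩ := mem_Usub.1 hrUB𝒮
      have hrS : r ∈ nsupport 𝒮 := subset_nsupport hB𝒮 hrB
      obtain ⟨hI₀𝒮, hrI₀, hI₀min⟩ := minMem_spec hN hrS
      have hI₀K : minMem 𝒮 r ⊆ K := hI₀min K hK𝒮 hrK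
      have hI₀𝒯 : minMem 𝒮 r ∈ 𝒯 := h𝒯r r hrS hrs
      have hr𝒯 : r ∈ nsupport 𝒯 := h𝒯supp.symm ▸ hrS
      have h1 : minMem 𝒯 r ⊆ minMem 𝒮 r := (minMem_spec hN𝒯 hr𝒯).2.2 _ hI₀𝒯 hrI₀
      rw [hminr𝒯] at h1
      exact hKB.2 ((h1.trans hI₀K))
end
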